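/- arXiv:1910.14384 — 7 statements merged into one kernel-verified Lean document; each statement's English description precedes it below -/
import Mathlib

section
/- Subsumption of pomsets with boxes is antisymmetric up to isomorphism: if there are homomorphisms φ : P → Q and ψ : Q → P between finite posets with boxes, then P and Q are isomorphic. -/
/-- A poset with boxes over an alphabet `A`. -/
structure PB (A : Type) : Type 1 where
  Ev : Type
  le : Ev → Ev → Prop
  le_refl : ∀ e, le e e
  le_trans : ∀ e f g, le e f → le f g → le e g
  le_antisymm : ∀ e f, le e f → le f e → e = f
  lab : Ev → A
  boxes : Set (Set Ev)
  boxes_ne : ∀ B ∈ boxes, B.Nonempty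

/-- A homomorphism of posets with boxes: a bijection preserving labels,
order and boxes. -/
structure Hom {A : Type} (P Q : PB A) where
  toFun : P.Ev → Q.Ev
  bij : Function.Bijective toFun
  lab_eq : ∀ e, Q.lab (toFun e) = P.lab e
  mono : ∀ e f, P.le e f → Q.le (toFun e) (toFun f)
  box_pres : ∀ B ∈ P.boxes, toFun '' B ∈ Q.boxes

/-- Order-reflecting homomorphism. -/
def Hom.OrdRefl {A : Type} {P Q : PB A} (φ : Hom P Q) : Prop :=
  ∀ e f, Q.le (φ.toFun e) (φ.toFun f) → P.le e f

/-- Box-reflecting homomorphism. -/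
def Hom.BoxRefl {A : Type} {P Q : PB A} (φ : Hom P Q) : Prop :=
  ∀ B : Set P.Ev, φ.toFun '' B ∈ Q.boxes → B ∈ P.boxes

/-- Isomorphism of posets with boxes. -/
def Iso {A : Type} (P Q : PB A) : Prop :=
  ∃ φ : Hom P Q, φ.OrdRefl ∧ φ.BoxRefl

/-- `Subsume P Q` means `P ⊑ Q` : there is a homomorphism from `Q` to `P`. -/
def Subsume {A : Type} (P Q : PB A) : Prop := Nonempty (Hom Q P)

/-- The empty poset with boxes. -/
def onePB (A : Type) : PB A where
  Ev := PEmpty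
  le := fun _ _ => True
  le_refl := fun e => trivial
  le_trans := fun _ _ _ _ _ => trivial
  le_antisymm := fun e => e.elim
  lab := fun e => e.elim
  boxes := ∅
  boxes_ne := fun _ h => absurd h (Set.notMem_empty _)

/-- The atomic poset with boxes, with a single event labelled `a`. -/
def atomPB {A : Type} (a : A) : PB A where
  Ev := PUnit
  le := fun _ _ => True
  le_refl := fun _ => trivial
  le_trans := fun _ _ _ _ _ => trivial
  le_antisymm := fun _ _ _ _ => rfl
  lab := fun _ => a
  boxes := ∅
  boxes_ne := fun _ h => absurd h (Set.notMem_empty _)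

/-- The order of a sequential composition on the disjoint union of events. -/
def seqLE {A : Type} (P Q : PB A) : P.Ev ⊕ Q.Ev → P.Ev ⊕ Q.Ev → Prop
  | .inl a, .inl b => P.le a b
  | .inr a, .inr b => Q.le a b
  | .inl _, .inr _ => True
  | .inr _, .inl _ => False

/-- Sequential composition of posets with boxes. -/
def seqPB {A : Type} (P Q : PB A) : PB A where
  Ev := P.Ev ⊕ Q.Ev
  le := seqLE P Q
  le_refl := fun e => by cases e <;> simp [seqLE, PB.le_refl]
  le_trans := fun e f g hef hfg => by
    cases e <;> cases f <;> cases g <;>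
      simp_all [seqLE] <;>
      first
        | exact P.le_trans _ _ _ hef hfg
        | exact Q.le_trans _ _ _ hef hfg
  le_antisymm := fun e f hef hfe => by
    cases e <;> cases f <;> simp_all [seqLE]
    · exact P.le_antisymm _ _ hef hfe
    · exact Q.le_antisymm _ _ hef hfe
  lab := Sum.elim P.lab Q.lab
  boxes := (Set.image Sum.inl '' P.boxes) ∪ (Set.image Sum.inr '' Q.boxes)
  boxes_ne := by
    rintro B (⟨C, hC, rfl⟩ | ⟨C, hC, rfl⟩)
    · exact ((P.boxes_ne C hC).image _)
    · exact ((Q.boxes_ne C hC).image _)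

/-- The order of a parallel composition on the disjoint union of events. -/
def parLE {A : Type} (P Q : PB A) : P.Ev ⊕ Q.Ev → P.Ev ⊕ Q.Ev → Prop
  | .inl a, .inl b => P.le a b
  | .inr a, .inr b => Q.le a b
  | .inl _, .inr _ => False
  | .inr _, .inl _ => False

/-- Parallel composition of posets with boxes. -/
def parPB {A : Type} (P Q : PB A) : PB A where
  Ev := P.Ev ⊕ Q.Ev
  le := parLE P Q
  le_refl := fun e => by cases e <;> simp [parLE, PB.le_refl]
  le_trans := fun e f g hef hfg => by
    cases e <;> cases f <;> cases g <;>
      simp_all [parLE] <;>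
      first
        | exact P.le_trans _ _ _ hef hfg
        | exact Q.le_trans _ _ _ hef hfg
  le_antisymm := fun e f hef hfe => by
    cases e <;> cases f <;> simp_all [parLE]
    · exact P.le_antisymm _ _ hef hfe
    · exact Q.le_antisymm _ _ hef hfe
  lab := Sum.elim P.lab Q.lab
  boxes := (Set.image Sum.inl '' P.boxes) ∪ (Set.image Sum.inr '' Q.boxes)
  boxes_ne := by
    rintro B (⟨C, hC, rfl⟩ | ⟨C, hC, rfl⟩)
    · exact ((P.boxes_ne C hC).image _)
    · exact ((Q.boxes_ne C hC).image _)

/-- Boxing: add the full (nonempty) set of events as a box. -/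
def boxPB {A : Type} (P : PB A) : PB A where
  Ev := P.Ev
  le := P.le
  le_refl := P.le_refl
  le_trans := P.le_trans
  le_antisymm := P.le_antisymm
  lab := P.lab
  boxes := P.boxes ∪ {B | B = Set.univ ∧ B.Nonempty}
  boxes_ne := by
    rintro B (hB | ⟨rfl, hne⟩)
    · exact P.boxes_ne B hB
    · exact hne

/-- Restriction of a poset with boxes to a subset of its events. -/
def restrictPB {A : Type} (P : PB A) (S : Set P.Ev) : PB A where
  Ev := S
  le := fun x y => P.le x.1 y.1
  le_refl := fun x => P.le_refl x.1
  le_trans := fun x y z => P.le_trans x.1 y.1 z.1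
  le_antisymm := fun x y h h' => Subtype.ext (P.le_antisymm _ _ h h')
  lab := fun x => P.lab x.1
  boxes := {B | Subtype.val '' B ∈ P.boxes}
  boxes_ne := fun B hB => by
    rcases P.boxes_ne _ hB with ⟨x, ⟨y, hy, rfl⟩⟩
    exact ⟨y, hy⟩

/-- Forbidden pattern P1 (the `N` pattern). -/
def hasP1 {A : Type} (P : PB A) : Prop :=
  ∃ e1 e2 e3 e4 : P.Ev,
    P.le e1 e3 ∧ P.le e2 e3 ∧ P.le e2 e4 ∧
    ¬ P.le e1 e4 ∧ ¬ P.le e2 e1 ∧ ¬ P.le e4 e3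

/-- Forbidden pattern P2 (overlapping non-nested boxes). -/
def hasP2 {A : Type} (P : PB A) : Prop :=
  ∃ (Bx Cx : Set P.Ev) (e1 e2 e3 : P.Ev),
    Bx ∈ P.boxes ∧ Cx ∈ P.boxes ∧
    e1 ∈ Bx \ Cx ∧ e2 ∈ Bx ∩ Cx ∧ e3 ∈ Cx \ Bx

/-- Forbidden pattern P3. -/
def hasP3 {A : Type} (P : PB A) : Prop :=
  ∃ (Bx : Set P.Ev) (e1 e2 e3 : P.Ev),
    Bx ∈ P.boxes ∧ e1 ∉ Bx ∧ e2 ∈ Bx ∧ e3 ∈ Bx ∧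
    P.le e1 e2 ∧ ¬ P.le e1 e3

/-- Forbidden pattern P4. -/
def hasP4 {A : Type} (P : PB A) : Prop :=
  ∃ (Bx : Set P.Ev) (e1 e2 e3 : P.Ev),
    Bx ∈ P.boxes ∧ e1 ∉ Bx ∧ e2 ∈ Bx ∧ e3 ∈ Bx ∧
    P.le e2 e1 ∧ ¬ P.le e3 e1

/-- A set of events is non-trivial if it is neither empty nor everything. -/
def NonTrivial {A : Type} (P : PB A) (S : Set P.Ev) : Prop :=
  S ≠ ∅ ∧ S ≠ Set.univ

/-- A set of events is nested if every box is contained in it or disjoint from it. -/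
def Nested {A : Type} (P : PB A) (S : Set P.Ev) : Prop :=
  ∀ B ∈ P.boxes, B ⊆ S ∨ B ∩ S = ∅

/-- A set of events is prefix if every event in it is below every event outside. -/
def IsPrefix {A : Type} (P : PB A) (S : Set P.Ev) : Prop :=
  ∀ e ∈ S, ∀ f ∉ S, P.le e f

/-- A set of events is isolated if its events are incomparable with outside events. -/
def Isolated {A : Type} (P : PB A) (S : Set P.Ev) : Prop :=
  ∀ e ∈ S, ∀ f ∉ S, ¬ P.le e f ∧ ¬ P.le f e


lemma iterate_id_of_bijective {α : Type*} [Finite α] (g : α → α) (hg : Function.Bijective g) :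
    ∃ n : ℕ, 0 < n ∧ g^[n] = id := by
  let e := Equiv.ofBijective g hg
  have : Finite (Equiv.Perm α) := inferInstance
  refine ⟨orderOf e, orderOf_pos e, ?_⟩
  funext x
  have h1 : ∀ k x, (e ^ k) x = g^[k] x := by
    intro k
    induction k with
    | zero => intro x; simp
    | succ k ih =>
      intro x
      rw [pow_succ, Function.iterate_succ_apply]
      rw [Equiv.Perm.mul_apply]
      exact ih (g x)
  have := h1 (orderOf e) x
  rw [pow_orderOf_eq_one e] at this
  simp at this
  simp [← this]

/-- Subsumption is antisymmetric up to isomorphism for finite posets with boxes. -/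
theorem subsumption_antisymm (A : Type) (P Q : PB A)
    (hP : Finite P.Ev) (hQ : Finite Q.Ev)
    (h1 : Nonempty (Hom P Q)) (h2 : Nonempty (Hom Q P)) :
    Iso P Q := by

  obtain ⟨φ⟩ := h1
  obtain ⟨ψ⟩ := h2
  let χ : P.Ev → P.Ev := ψ.toFun ∘ φ.toFun
  have hbij : Function.Bijective χ := ψ.bij.comp φ.bij
  obtain ⟨n, hn, hid⟩ := iterate_id_of_bijective χ hbij
  have key : ∀ S : Set P.Ev, χ '' S = ψ.toFun '' (φ.toFun '' S) := fun S =>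
    Set.image_comp _ _ _
  have hmono : ∀ k x y, P.le x y → P.le (χ^[k] x) (χ^[k] y) := by
    intro k
    induction k with
    | zero => intro x y h; simpa using h
    | succ k ih =>
      intro x y h
      rw [Function.iterate_succ_apply', Function.iterate_succ_apply']
      exact ψ.mono _ _ (φ.mono _ _ (ih x y h))
  have hbox : ∀ k, ∀ B ∈ P.boxes, χ^[k] '' B ∈ P.boxes := by
    intro k
    induction k with
    | zero => intro B h; simpa using h
    | succ k ih =>
      intro B h
      rw [Function.iterate_succ', Set.image_comp, key]
      exact ψ.box_pres _ (φ.box_pres _ (ih B h))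
  have hsn : (n - 1).succ = n := Nat.succ_pred_eq_of_pos hn
  refine ⟨φ, ?_, ?_⟩
  · intro x y h
    have h2 : P.le (χ x) (χ y) := ψ.mono _ _ h
    have h3 := hmono (n - 1) _ _ h2
    rw [← Function.iterate_succ_apply, ← Function.iterate_succ_apply, hsn, hid] at h3
    simpa using h3
  · intro B h
    have h2 : χ '' B ∈ P.boxes := by rw [key]; exact ψ.box_pres _ h
    have h3 := hbox (n - 1) _ h2
    rw [← Set.image_comp, ← Function.iterate_succ, hsn, hid, Set.image_id] at h3
    exact h3
end

section
/- There exist infinite posets P and Q with homomorphisms in both directions that are not isomorphic; concretely, with all events labelled a and no boxes, P = ℕ×{0,1,2} with (n,i) ≤ (m,j) iff n ≤ m and i = j < 2, and Q = ℕ×{0,1} with (n,i) ≤ (m,j) iff n ≤ m and i = j = 0, admit order-preserving label-preserving bijections in both directions but no order-reflecting bijection. -/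
/-- The infinite poset `ℕ × {0,1,2}` with `(n,i) ≤ (m,j)` iff `n ≤ m` and `i = j < 2`,
all events labelled by the unique letter, no boxes. -/
def Pex : PB Unit where
  Ev := ℕ × Fin 3
  le := fun x y => x = y ∨ (x.1 ≤ y.1 ∧ x.2 = y.2 ∧ x.2.val < 2)
  le_refl := fun _ => Or.inl rfl
  le_trans := by
    rintro e f g (rfl | ⟨h1, h2, h3⟩) hfg
    · exact hfg
    · rcases hfg with rfl | ⟨k1, k2, k3⟩
      · exact Or.inr ⟨h1, h2, h3⟩
      · exact Or.inr ⟨le_trans h1 k1, h2.trans k2, h3⟩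
  le_antisymm := by
    rintro e f (rfl | ⟨h1, h2, h3⟩) hfe
    · rfl
    · rcases hfe with rfl | ⟨k1, k2, _⟩
      · rfl
      · exact Prod.ext (le_antisymm h1 k1) h2
  lab := fun _ => ()
  boxes := ∅
  boxes_ne := fun _ h => absurd h (Set.notMem_empty _)

/-- The infinite poset `ℕ × {0,1}` with `(n,i) ≤ (m,j)` iff `n ≤ m` and `i = j = 0`,
all events labelled by the unique letter, no boxes. -/
def Qex : PB Unit where
  Ev := ℕ × Fin 2
  le := fun x y => x = y ∨ (x.1 ≤ y.1 ∧ x.2 = y.2 ∧ x.2.val = 0)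
  le_refl := fun _ => Or.inl rfl
  le_trans := by
    rintro e f g (rfl | ⟨h1, h2, h3⟩) hfg
    · exact hfg
    · rcases hfg with rfl | ⟨k1, k2, k3⟩
      · exact Or.inr ⟨h1, h2, h3⟩
      · exact Or.inr ⟨le_trans h1 k1, h2.trans k2, h3⟩
  le_antisymm := by
    rintro e f (rfl | ⟨h1, h2, h3⟩) hfe
    · rfl
    · rcases hfe with rfl | ⟨k1, k2, _⟩
      · rfl
      · exact Prod.ext (le_antisymm h1 k1) h2
  lab := fun _ => ()
  boxes := ∅
  boxes_ne := fun _ h => absurd h (Set.notMem_empty _)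

/-- Forward map: interleave the two chains of `Pex` into the chain of `Qex`,
send the antichain of `Pex` to the antichain of `Qex`. -/
def fP : ℕ × Fin 3 → ℕ × Fin 2 :=
  fun p => if p.2.val = 2 then (p.1, 1) else (2 * p.1 + p.2.val, 0)

def fPinv : ℕ × Fin 2 → ℕ × Fin 3 :=
  fun q => if q.2.val = 1 then (q.1, 2)
    else if q.1 % 2 = 0 then (q.1 / 2, 0) else (q.1 / 2, 1)

theorem fP_bij : Function.Bijective fP := by
  apply Function.bijective_iff_has_inverse.mpr
  refine ⟨fPinv, ?_, ?_⟩
  · rintro ⟨n, i⟩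
    fin_cases i
    · show fPinv (2 * n + 0, 0) = _
      unfold fPinv
      rw [if_neg (by norm_num), if_pos (by omega)]
      exact Prod.ext (by omega) rfl
    · show fPinv (2 * n + 1, 0) = _
      unfold fPinv
      rw [if_neg (by norm_num), if_neg (by omega)]
      exact Prod.ext (by omega) rfl
    · rfl
  · rintro ⟨n, i⟩
    fin_cases i
    · show fP (if n % 2 = 0 then (n / 2, 0) else (n / 2, 1)) = _
      by_cases h : n % 2 = 0
      · rw [if_pos h]; show (2 * (n / 2) + 0, (0 : Fin 2)) = _
        exact Prod.ext (by omega) rfl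
      · rw [if_neg h]; show (2 * (n / 2) + 1, (0 : Fin 2)) = _
        exact Prod.ext (by omega) rfl
    · rfl

/-- Backward map: the chain of `Qex` goes to one chain of `Pex`, the antichain
of `Qex` splits into the other chain and the antichain of `Pex`. -/
def gQ : ℕ × Fin 2 → ℕ × Fin 3 :=
  fun q => if q.2.val = 0 then (q.1, 0)
    else if q.1 % 2 = 0 then (q.1 / 2, 1) else (q.1 / 2, 2)

def gQinv : ℕ × Fin 3 → ℕ × Fin 2 :=
  fun p => if p.2.val = 0 then (p.1, 0)
    else if p.2.val = 1 then (2 * p.1, 1) else (2 * p.1 + 1, 1)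

theorem gQ_bij : Function.Bijective gQ := by
  apply Function.bijective_iff_has_inverse.mpr
  refine ⟨gQinv, ?_, ?_⟩
  · rintro ⟨n, i⟩
    fin_cases i
    · rfl
    · show gQinv (if n % 2 = 0 then (n / 2, 1) else (n / 2, 2)) = _
      by_cases h : n % 2 = 0
      · rw [if_pos h]; show (2 * (n / 2), (1 : Fin 2)) = _
        exact Prod.ext (by omega) rfl
      · rw [if_neg h]; show (2 * (n / 2) + 1, (1 : Fin 2)) = _
        exact Prod.ext (by omega) rfl
  · rintro ⟨n, i⟩
    fin_cases i
    · rfl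
    · show gQ (2 * n, 1) = _
      unfold gQ
      rw [if_neg (by norm_num), if_pos (by omega)]
      exact Prod.ext (by omega) rfl
    · show gQ (2 * n + 1, 1) = _
      unfold gQ
      rw [if_neg (by norm_num), if_neg (by omega)]
      exact Prod.ext (by omega) rfl

/-- There exist infinite posets with homomorphisms in both directions that are
not isomorphic: `Pex` and `Qex` admit order- and label-preserving bijections in
both directions, but are not isomorphic (no order-reflecting bijection). -/
theorem mutual_homomorphic_not_isomorphic :
    Nonempty (Hom Pex Qex) ∧ Nonempty (Hom Qex Pex) ∧ ¬ Iso Pex Qex := by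
  refine ⟨⟨⟨fP, fP_bij, fun _ => rfl, ?_, ?_⟩⟩, ⟨⟨gQ, gQ_bij, fun _ => rfl, ?_, ?_⟩⟩, ?_⟩
  · -- mono for fP
    rintro e f (rfl | ⟨h1, h2, h3⟩)
    · exact Or.inl rfl
    · right
      have hne : e.2.val ≠ 2 := by omega
      have hne' : f.2.val ≠ 2 := by rw [← h2]; omega
      unfold fP
      rw [if_neg hne, if_neg hne', h2]
      exact ⟨by omega, rfl, by norm_num⟩
  · -- box_pres for fP : Pex has no boxes
    rintro B hB
    exact absurd hB (Set.notMem_empty _)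
  · -- mono for gQ
    rintro e f (rfl | ⟨h1, h2, h3⟩)
    · exact Or.inl rfl
    · right
      have hf : f.2.val = 0 := by rw [← h2]; exact h3
      unfold gQ
      rw [if_pos h3, if_pos hf]
      exact ⟨h1, rfl, by norm_num⟩
  · rintro B hB
    exact absurd hB (Set.notMem_empty _)
  · -- not isomorphic
    rintro ⟨φ, hrefl, -⟩
    have key : ∀ i : Fin 3, i.val < 2 → (φ.toFun (0, i)).2.val = 0 := by
      intro i hi
      have hle : Qex.le (φ.toFun (0, i)) (φ.toFun (1, i)) :=
        φ.mono _ _ (Or.inr ⟨by norm_num, rfl, hi⟩)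
      have hne : φ.toFun (0, i) ≠ φ.toFun (1, i) := by
        intro h
        have h' := congrArg Prod.fst (φ.bij.injective h)
        exact absurd h' (by norm_num)
      rcases hle with h | ⟨-, -, h3⟩
      · exact absurd h hne
      · exact h3
    have h0 := key 0 (by norm_num)
    have h1 := key 1 (by norm_num)
    set a := φ.toFun (0, (0 : Fin 3)) with ha
    set b := φ.toFun (0, (1 : Fin 3)) with hb
    have hdist : ((0 : ℕ), (0 : Fin 3)) ≠ ((0 : ℕ), (1 : Fin 3)) := by decide
    have hcomp : Qex.le a b ∨ Qex.le b a := by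
      have h2 : a.2 = b.2 := by apply Fin.ext; omega
      rcases le_total a.1 b.1 with h | h
      · exact Or.inl (Or.inr ⟨h, h2, h0⟩)
      · exact Or.inr (Or.inr ⟨h, h2.symm, h1⟩)
    rcases hcomp with h | h
    · rcases hrefl _ _ h with h' | ⟨-, h2, -⟩
      · exact hdist h'
      · exact absurd (congrArg Fin.val h2) (by decide)
    · rcases hrefl _ _ h with h' | ⟨-, h2, -⟩
      · exact hdist h'.symm
      · exact absurd (congrArg Fin.val h2) (by decide)
end

section
/- Every series–parallel pomset with boxes (i.e., the interpretation of any term built from 1, atoms, sequential composition, parallel composition, and boxing) avoids all four forbidden patterns P1 (the 'N' pattern), P2 (overlapping non-nested boxes), P3, and P4 (an external event distinguishing events inside a box by the order). -/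
/-- Series–parallel terms. -/
inductive Term (A : Type) : Type
  | one : Term A
  | atom (a : A) : Term A
  | seq (s t : Term A) : Term A
  | par (s t : Term A) : Term A
  | box (s : Term A) : Term A

/-- Interpretation of terms as posets with boxes. -/
def semT {A : Type} : Term A → PB A
  | .one => onePB A
  | .atom a => atomPB a
  | .seq s t => seqPB (semT s) (semT t)
  | .par s t => parPB (semT s) (semT t)
  | .box s => boxPB (semT s)

/-- Derivability in the equational theory of bimonoids with boxes. -/
inductive BimEq {A : Type} : Term A → Term A → Prop
  | seq_assoc (s t u : Term A) : BimEq (.seq s (.seq t u)) (.seq (.seq s t) u)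
  | par_assoc (s t u : Term A) : BimEq (.par s (.par t u)) (.par (.par s t) u)
  | par_comm (s t : Term A) : BimEq (.par s t) (.par t s)
  | seq_unit_l (s : Term A) : BimEq (.seq .one s) s
  | seq_unit_r (s : Term A) : BimEq (.seq s .one) s
  | par_unit (s : Term A) : BimEq (.par .one s) s
  | box_box (s : Term A) : BimEq (.box (.box s)) (.box s)
  | box_one : BimEq (.box .one) .one
  | refl (s : Term A) : BimEq s s
  | symm {s t : Term A} : BimEq s t → BimEq t s
  | trans {s t u : Term A} : BimEq s t → BimEq t u → BimEq s u
  | seq_congr {s s' t t' : Term A} : BimEq s s' → BimEq t t' → BimEq (.seq s t) (.seq s' t')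
  | par_congr {s s' t t' : Term A} : BimEq s s' → BimEq t t' → BimEq (.par s t) (.par s' t')
  | box_congr {s s' : Term A} : BimEq s s' → BimEq (.box s) (.box s')

/-- Derivability in the inequational theory of concurrent monoids with boxes:
bimonoid axioms (in both directions) together with exchange and box elimination. -/
inductive CMLe {A : Type} : Term A → Term A → Prop
  | of_eq {s t : Term A} : BimEq s t → CMLe s t
  | exchange (s t u v : Term A) :
      CMLe (.seq (.par s t) (.par u v)) (.par (.seq s u) (.seq t v))
  | box_le (s : Term A) : CMLe (.box s) s
  | refl (s : Term A) : CMLe s s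
  | trans {s t u : Term A} : CMLe s t → CMLe t u → CMLe s u
  | seq_congr {s s' t t' : Term A} : CMLe s s' → CMLe t t' → CMLe (.seq s t) (.seq s' t')
  | par_congr {s s' t t' : Term A} : CMLe s s' → CMLe t t' → CMLe (.par s t) (.par s' t')
  | box_congr {s s' : Term A} : CMLe s s' → CMLe (.box s) (.box s')

section Aux

variable {A : Type} {P Q : PB A}

lemma noP1_seq (hP : ¬ hasP1 P) (hQ : ¬ hasP1 Q) : ¬ hasP1 (seqPB P Q) := by
  rintro ⟨e1, e2, e3, e4, h13, h23, h24, h14, h21, h43⟩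
  cases e1 <;> cases e2 <;> cases e3 <;> cases e4 <;>
    simp_all [seqPB, seqLE] <;>
    first
      | exact hP ⟨_, _, _, _, h13, h23, h24, h14, h21, h43⟩
      | exact hQ ⟨_, _, _, _, h13, h23, h24, h14, h21, h43⟩

lemma noP1_par (hP : ¬ hasP1 P) (hQ : ¬ hasP1 Q) : ¬ hasP1 (parPB P Q) := by
  rintro ⟨e1, e2, e3, e4, h13, h23, h24, h14, h21, h43⟩
  cases e1 <;> cases e2 <;> cases e3 <;> cases e4 <;>
    simp_all [parPB, parLE] <;>
    first
      | exact hP ⟨_, _, _, _, h13, h23, h24, h14, h21, h43⟩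
      | exact hQ ⟨_, _, _, _, h13, h23, h24, h14, h21, h43⟩

lemma noP2_seq (hP : ¬ hasP2 P) (hQ : ¬ hasP2 Q) : ¬ hasP2 (seqPB P Q) := by
  rintro ⟨Bx, Cx, e1, e2, e3, hB, hC, h1, h2, h3⟩
  rcases hB with ⟨B', hB', rfl⟩ | ⟨B', hB', rfl⟩ <;>
    rcases hC with ⟨C', hC', rfl⟩ | ⟨C', hC', rfl⟩
  · obtain ⟨a2, ha2B, rfl⟩ := h2.1
    obtain ⟨a1, ha1B, rfl⟩ := h1.1
    obtain ⟨a3, ha3C, rfl⟩ := h3.1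
    exact hP ⟨B', C', a1, a2, a3, hB', hC',
      ⟨ha1B, fun h => h1.2 ⟨a1, h, rfl⟩⟩,
      ⟨ha2B, by rcases h2.2 with ⟨c, hc, hce⟩; cases hce; exact hc⟩,
      ⟨ha3C, fun h => h3.2 ⟨a3, h, rfl⟩⟩⟩
  · obtain ⟨a2, ha2B, he2⟩ := h2.1
    obtain ⟨c2, hc2C, he2'⟩ := h2.2
    rw [← he2] at he2'; cases he2'
  · obtain ⟨a2, ha2B, he2⟩ := h2.1
    obtain ⟨c2, hc2C, he2'⟩ := h2.2
    rw [← he2] at he2'; cases he2'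
  · obtain ⟨a2, ha2B, rfl⟩ := h2.1
    obtain ⟨a1, ha1B, rfl⟩ := h1.1
    obtain ⟨a3, ha3C, rfl⟩ := h3.1
    exact hQ ⟨B', C', a1, a2, a3, hB', hC',
      ⟨ha1B, fun h => h1.2 ⟨a1, h, rfl⟩⟩,
      ⟨ha2B, by rcases h2.2 with ⟨c, hc, hce⟩; cases hce; exact hc⟩,
      ⟨ha3C, fun h => h3.2 ⟨a3, h, rfl⟩⟩⟩

lemma noP2_par (hP : ¬ hasP2 P) (hQ : ¬ hasP2 Q) : ¬ hasP2 (parPB P Q) := by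
  rintro ⟨Bx, Cx, e1, e2, e3, hB, hC, h1, h2, h3⟩
  rcases hB with ⟨B', hB', rfl⟩ | ⟨B', hB', rfl⟩ <;>
    rcases hC with ⟨C', hC', rfl⟩ | ⟨C', hC', rfl⟩
  · obtain ⟨a2, ha2B, rfl⟩ := h2.1
    obtain ⟨a1, ha1B, rfl⟩ := h1.1
    obtain ⟨a3, ha3C, rfl⟩ := h3.1
    exact hP ⟨B', C', a1, a2, a3, hB', hC',
      ⟨ha1B, fun h => h1.2 ⟨a1, h, rfl⟩⟩,
      ⟨ha2B, by rcases h2.2 with ⟨c, hc, hce⟩; cases hce; exact hc⟩,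
      ⟨ha3C, fun h => h3.2 ⟨a3, h, rfl⟩⟩⟩
  · obtain ⟨a2, ha2B, he2⟩ := h2.1
    obtain ⟨c2, hc2C, he2'⟩ := h2.2
    rw [← he2] at he2'; cases he2'
  · obtain ⟨a2, ha2B, he2⟩ := h2.1
    obtain ⟨c2, hc2C, he2'⟩ := h2.2
    rw [← he2] at he2'; cases he2'
  · obtain ⟨a2, ha2B, rfl⟩ := h2.1
    obtain ⟨a1, ha1B, rfl⟩ := h1.1
    obtain ⟨a3, ha3C, rfl⟩ := h3.1
    exact hQ ⟨B', C', a1, a2, a3, hB', hC',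
      ⟨ha1B, fun h => h1.2 ⟨a1, h, rfl⟩⟩,
      ⟨ha2B, by rcases h2.2 with ⟨c, hc, hce⟩; cases hce; exact hc⟩,
      ⟨ha3C, fun h => h3.2 ⟨a3, h, rfl⟩⟩⟩

lemma noP3_seq (hP : ¬ hasP3 P) (hQ : ¬ hasP3 Q) : ¬ hasP3 (seqPB P Q) := by
  rintro ⟨Bx, e1, e2, e3, hB, h1, h2, h3, h12, h13⟩
  rcases hB with ⟨B', hB', rfl⟩ | ⟨B', hB', rfl⟩
  · obtain ⟨a2, ha2, rfl⟩ := h2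
    obtain ⟨a3, ha3, rfl⟩ := h3
    cases e1 with
    | inl a1 =>
        exact hP ⟨B', a1, a2, a3, hB', fun h => h1 ⟨a1, h, rfl⟩, ha2, ha3, h12, h13⟩
    | inr a1 => exact h12
  · obtain ⟨a2, ha2, rfl⟩ := h2
    obtain ⟨a3, ha3, rfl⟩ := h3
    cases e1 with
    | inl a1 => exact h13 trivial
    | inr a1 =>
        exact hQ ⟨B', a1, a2, a3, hB', fun h => h1 ⟨a1, h, rfl⟩, ha2, ha3, h12, h13⟩

lemma noP3_par (hP : ¬ hasP3 P) (hQ : ¬ hasP3 Q) : ¬ hasP3 (parPB P Q) := by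
  rintro ⟨Bx, e1, e2, e3, hB, h1, h2, h3, h12, h13⟩
  rcases hB with ⟨B', hB', rfl⟩ | ⟨B', hB', rfl⟩
  · obtain ⟨a2, ha2, rfl⟩ := h2
    obtain ⟨a3, ha3, rfl⟩ := h3
    cases e1 with
    | inl a1 =>
        exact hP ⟨B', a1, a2, a3, hB', fun h => h1 ⟨a1, h, rfl⟩, ha2, ha3, h12, h13⟩
    | inr a1 => exact h12
  · obtain ⟨a2, ha2, rfl⟩ := h2
    obtain ⟨a3, ha3, rfl⟩ := h3
    cases e1 with
    | inl a1 => exact h12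
    | inr a1 =>
        exact hQ ⟨B', a1, a2, a3, hB', fun h => h1 ⟨a1, h, rfl⟩, ha2, ha3, h12, h13⟩

lemma noP4_seq (hP : ¬ hasP4 P) (hQ : ¬ hasP4 Q) : ¬ hasP4 (seqPB P Q) := by
  rintro ⟨Bx, e1, e2, e3, hB, h1, h2, h3, h21, h31⟩
  rcases hB with ⟨B', hB', rfl⟩ | ⟨B', hB', rfl⟩
  · obtain ⟨a2, ha2, rfl⟩ := h2
    obtain ⟨a3, ha3, rfl⟩ := h3
    cases e1 with
    | inl a1 =>
        exact hP ⟨B', a1, a2, a3, hB', fun h => h1 ⟨a1, h, rfl⟩, ha2, ha3, h21, h31⟩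
    | inr a1 => exact h31 trivial
  · obtain ⟨a2, ha2, rfl⟩ := h2
    obtain ⟨a3, ha3, rfl⟩ := h3
    cases e1 with
    | inl a1 => exact h21
    | inr a1 =>
        exact hQ ⟨B', a1, a2, a3, hB', fun h => h1 ⟨a1, h, rfl⟩, ha2, ha3, h21, h31⟩

lemma noP4_par (hP : ¬ hasP4 P) (hQ : ¬ hasP4 Q) : ¬ hasP4 (parPB P Q) := by
  rintro ⟨Bx, e1, e2, e3, hB, h1, h2, h3, h21, h31⟩
  rcases hB with ⟨B', hB', rfl⟩ | ⟨B', hB', rfl⟩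
  · obtain ⟨a2, ha2, rfl⟩ := h2
    obtain ⟨a3, ha3, rfl⟩ := h3
    cases e1 with
    | inl a1 =>
        exact hP ⟨B', a1, a2, a3, hB', fun h => h1 ⟨a1, h, rfl⟩, ha2, ha3, h21, h31⟩
    | inr a1 => exact h21
  · obtain ⟨a2, ha2, rfl⟩ := h2
    obtain ⟨a3, ha3, rfl⟩ := h3
    cases e1 with
    | inl a1 => exact h21
    | inr a1 =>
        exact hQ ⟨B', a1, a2, a3, hB', fun h => h1 ⟨a1, h, rfl⟩, ha2, ha3, h21, h31⟩

lemma noP1_box (hP : ¬ hasP1 P) : ¬ hasP1 (boxPB P) := hP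

lemma noP2_box (hP : ¬ hasP2 P) : ¬ hasP2 (boxPB P) := by
  rintro ⟨Bx, Cx, e1, e2, e3, hB, hC, h1, h2, h3⟩
  rcases hB with hB | ⟨rfl, -⟩
  · rcases hC with hC | ⟨rfl, -⟩
    · exact hP ⟨Bx, Cx, e1, e2, e3, hB, hC, h1, h2, h3⟩
    · exact h1.2 (Set.mem_univ _)
  · exact h3.2 (Set.mem_univ _)

lemma noP3_box (hP : ¬ hasP3 P) : ¬ hasP3 (boxPB P) := by
  rintro ⟨Bx, e1, e2, e3, hB, h1, h2, h3, h12, h13⟩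
  rcases hB with hB | ⟨rfl, -⟩
  · exact hP ⟨Bx, e1, e2, e3, hB, h1, h2, h3, h12, h13⟩
  · exact h1 (Set.mem_univ _)

lemma noP4_box (hP : ¬ hasP4 P) : ¬ hasP4 (boxPB P) := by
  rintro ⟨Bx, e1, e2, e3, hB, h1, h2, h3, h21, h31⟩
  rcases hB with hB | ⟨rfl, -⟩
  · exact hP ⟨Bx, e1, e2, e3, hB, h1, h2, h3, h21, h31⟩
  · exact h1 (Set.mem_univ _)

end Aux

/-- Every series–parallel pomset with boxes avoids all four forbidden patterns. -/
theorem sp_avoids_patterns (A : Type) (t : Term A) :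
    ¬ hasP1 (semT t) ∧ ¬ hasP2 (semT t) ∧ ¬ hasP3 (semT t) ∧ ¬ hasP4 (semT t) := by
  induction t with
  | one =>
      refine ⟨?_, ?_, ?_, ?_⟩
      · rintro ⟨e, -⟩; exact e.elim
      · rintro ⟨B, C, e, -⟩; exact e.elim
      · rintro ⟨B, e, -⟩; exact e.elim
      · rintro ⟨B, e, -⟩; exact e.elim
  | atom a =>
      refine ⟨?_, ?_, ?_, ?_⟩
      · rintro ⟨e1, e2, e3, e4, -, -, -, h14, -⟩; exact h14 trivial
      · rintro ⟨B, C, e1, e2, e3, hB, -⟩; exact hB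
      · rintro ⟨B, e1, e2, e3, hB, -⟩; exact hB
      · rintro ⟨B, e1, e2, e3, hB, -⟩; exact hB
  | seq s t ihs iht =>
      exact ⟨noP1_seq ihs.1 iht.1, noP2_seq ihs.2.1 iht.2.1,
        noP3_seq ihs.2.2.1 iht.2.2.1, noP4_seq ihs.2.2.2 iht.2.2.2⟩
  | par s t ihs iht =>
      exact ⟨noP1_par ihs.1 iht.1, noP2_par ihs.2.1 iht.2.1,
        noP3_par ihs.2.2.1 iht.2.2.1, noP4_par ihs.2.2.2 iht.2.2.2⟩
  | box s ihs =>
      exact ⟨noP1_box ihs.1, noP2_box ihs.2.1,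
        noP3_box ihs.2.2.1, noP4_box ihs.2.2.2⟩
end

section
/- Let P be a finite poset with boxes whose full event set is not a box, having at least two events, and avoiding patterns P2, P3, P4. If P contains a non-trivial prefix set of events, then P contains a non-trivial prefix set that is also nested. -/
/-- If a finite poset with boxes (whose full event set is not a box, with at least
two events, avoiding patterns P2, P3, P4) contains a non-trivial prefix set, it
contains a non-trivial prefix set that is nested. -/
theorem nontrivial_prefix_nested (A : Type) (P : PB A)
    (hfin : Finite P.Ev)
    (hbox : (Set.univ : Set P.Ev) ∉ P.boxes)
    (htwo : ∃ e f : P.Ev, e ≠ f)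
    (h2 : ¬ hasP2 P) (h3 : ¬ hasP3 P) (h4 : ¬ hasP4 P)
    (hA : ∃ S : Set P.Ev, NonTrivial P S ∧ IsPrefix P S) :
    ∃ S : Set P.Ev, NonTrivial P S ∧ IsPrefix P S ∧ Nested P S := by
  classical
  haveI := hfin
  obtain ⟨S0, hS0nt, hS0pre⟩ := hA
  -- laminarity from ¬P2
  have lam : ∀ B ∈ P.boxes, ∀ C ∈ P.boxes, (B ∩ C).Nonempty → B ⊆ C ∨ C ⊆ B := by
    intro B hB C hC ⟨z, hzB, hzC⟩
    by_contra h
    push_neg at h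
    obtain ⟨hBC, hCB⟩ := h
    obtain ⟨x, hxB, hxC⟩ := Set.not_subset.mp hBC
    obtain ⟨y, hyC, hyB⟩ := Set.not_subset.mp hCB
    exact h2 ⟨B, C, x, z, y, hB, hC, ⟨hxB, hxC⟩, ⟨hzB, hzC⟩, ⟨hyC, hyB⟩⟩
  have key : ∀ n : ℕ, ∀ S : Set P.Ev, NonTrivial P S → IsPrefix P S →
      {B | B ∈ P.boxes ∧ (B ∩ S).Nonempty ∧ ¬ B ⊆ S}.ncard ≤ n →
      ∃ S' : Set P.Ev, NonTrivial P S' ∧ IsPrefix P S' ∧ Nested P S' := by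
    intro n
    induction n with
    | zero =>
      intro S hnt hpre hcard
      refine ⟨S, hnt, hpre, ?_⟩
      have hemp : {B | B ∈ P.boxes ∧ (B ∩ S).Nonempty ∧ ¬ B ⊆ S} = ∅ := by
        have := Set.ncard_eq_zero (Set.toFinite _) |>.mp (Nat.le_zero.mp hcard)
        exact this
      intro B hB
      by_contra h
      push_neg at h
      obtain ⟨h1, h2'⟩ := h
      have : B ∈ ({B | B ∈ P.boxes ∧ (B ∩ S).Nonempty ∧ ¬ B ⊆ S} : Set _) :=
        ⟨hB, h2', h1⟩
      rw [hemp] at this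
      exact this
    | succ n ih =>
      intro S hnt hpre hcard
      set V : Set (Set P.Ev) := {B | B ∈ P.boxes ∧ (B ∩ S).Nonempty ∧ ¬ B ⊆ S} with hV
      by_cases hVe : V = ∅
      · refine ⟨S, hnt, hpre, ?_⟩
        intro B hB
        by_contra h
        push_neg at h
        obtain ⟨h1, h2'⟩ := h
        have : B ∈ V := ⟨hB, h2', h1⟩
        rw [hVe] at this
        exact this
      · -- pick a maximal violator
        obtain ⟨B, hBV, hBmax⟩ := Set.Finite.exists_maximalFor id V (Set.toFinite V)
          (Set.nonempty_iff_ne_empty.mpr hVe)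
        obtain ⟨hBbox, ⟨e, heB, heS⟩, hBnS⟩ := hBV
        obtain ⟨f, hfB, hfS⟩ := Set.not_subset.mp hBnS
        -- (a) everything in S \ B is below all of B
        have ha : ∀ g ∈ S, g ∉ B → ∀ x ∈ B, P.le g x := by
          intro g hgS hgB x hx
          by_contra hle
          exact h3 ⟨B, g, f, x, hBbox, hgB, hfB, hx, hpre g hgS f hfS, hle⟩
        -- (b) everything in B is below anything outside S ∪ B
        have hb : ∀ g, g ∉ S → g ∉ B → ∀ x ∈ B, P.le x g := by
          intro g hgS hgB x hx
          by_contra hle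
          exact h4 ⟨B, g, e, x, hBbox, hgB, heB, hx, hpre e heS g hgS, hle⟩
        -- a new violator is an old violator different from B
        have hsub : ∀ S' : Set P.Ev, (S' = S ∪ B ∨ S' = S \ B) →
            {C | C ∈ P.boxes ∧ (C ∩ S').Nonempty ∧ ¬ C ⊆ S'} ⊆ V \ {B} := by
          rintro S' (rfl | rfl) C ⟨hCbox, hCS', hCnS'⟩
          · have hCneB : C ≠ B := fun h => hCnS' (h ▸ Set.subset_union_right)
            refine ⟨⟨hCbox, ?_, fun h => hCnS' (h.trans Set.subset_union_left)⟩, hCneB⟩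
            by_cases hCB : (C ∩ B).Nonempty
            · rcases lam C hCbox B hBbox hCB with h | h
              · exact absurd (h.trans Set.subset_union_right) hCnS'
              · have hCV : C ∈ V := ⟨hCbox, ⟨e, h heB, heS⟩,
                  fun hh => hCnS' (hh.trans Set.subset_union_left)⟩
                have hBC : B = C := le_antisymm h (hBmax hCV h)
                rw [← hBC] at hCnS'
                exact absurd Set.subset_union_right hCnS'
            · obtain ⟨z, hzC, hzSB⟩ := hCS'
              rcases hzSB with hz | hz
              · exact ⟨z, hzC, hz⟩
              · exact absurd ⟨z, hzC, hz⟩ hCB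
          · have hCneB : C ≠ B := by
              rintro rfl
              obtain ⟨z, hzC, _, hzB⟩ := hCS'
              exact hzB hzC
            refine ⟨⟨hCbox, ?_, ?_⟩, hCneB⟩
            · obtain ⟨z, hzC, hzS, _⟩ := hCS'
              exact ⟨z, hzC, hzS⟩
            · intro hCS
              have hCB : (C ∩ B).Nonempty := by
                by_contra hCB
                apply hCnS'
                intro x hx
                exact ⟨hCS hx, fun hxB => hCB ⟨x, hx, hxB⟩⟩
              rcases lam C hCbox B hBbox hCB with h | h
              · obtain ⟨z, hzC, _, hzB⟩ := hCS'
                exact hzB (h hzC)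
              · exact hBnS (h.trans hCS)
        have hVfin : V.Finite := Set.toFinite V
        have hlt : (V \ {B}).ncard < V.ncard := by
          have hBV' : B ∈ V := ⟨hBbox, ⟨e, heB, heS⟩, hBnS⟩
          exact Set.ncard_diff_singleton_lt_of_mem hBV' hVfin
        have hle' : (V \ {B}).ncard ≤ n := by omega
        by_cases huniv : S ∪ B = Set.univ
        · -- shrink
          refine ih (S \ B) ⟨?_, ?_⟩ ?_ ?_
          · intro h
            have hSB : S ⊆ B := by
              intro x hx
              by_contra hxB
              have hmem : x ∈ S \ B := ⟨hx, hxB⟩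
              rw [h] at hmem
              exact hmem
            have : B = Set.univ := by
              apply Set.eq_univ_of_univ_subset
              rw [← huniv]
              exact Set.union_subset hSB (le_refl B)
            exact hbox (this ▸ hBbox)
          · intro h
            exact (h ▸ (fun hh : f ∈ S \ B => hh.2 hfB)) (h ▸ Set.mem_univ f)
          · intro x hx g hg
            rcases hx with ⟨hxS, hxB⟩
            by_cases hgS : g ∈ S
            · have hgB : g ∈ B := by
                by_contra hgB
                exact hg ⟨hgS, hgB⟩
              exact ha x hxS hxB g hgB
            · exact hpre x hxS g hgS
          · exact le_trans (Set.ncard_le_ncard (hsub _ (Or.inr rfl)) (hVfin.diff)) hle'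
        · -- grow
          refine ih (S ∪ B) ⟨?_, huniv⟩ ?_ ?_
          · intro h
            exact (Set.eq_empty_iff_forall_notMem.mp h e) (Or.inl heS)
          · intro x hx g hg
            have hgS : g ∉ S := fun h => hg (Or.inl h)
            have hgB : g ∉ B := fun h => hg (Or.inr h)
            rcases hx with hx | hx
            · exact hpre x hx g hgS
            · exact hb g hgS hgB x hx
          · exact le_trans (Set.ncard_le_ncard (hsub _ (Or.inl rfl)) (hVfin.diff)) hle'
  exact key _ S0 hS0nt hS0pre (le_refl _)
end

section
/- Let P be a finite poset with boxes whose full event set is not a box, having at least two events, and avoiding patterns P2, P3, P4. If P contains a non-trivial isolated set of events, then P contains a non-trivial isolated set that is also nested. -/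
/-- If a finite poset with boxes (whose full event set is not a box, with at least
two events, avoiding patterns P2, P3, P4) contains a non-trivial isolated set, it
contains a non-trivial isolated set that is nested. -/
theorem nontrivial_isolated_nested (A : Type) (P : PB A)
    (hfin : Finite P.Ev)
    (hbox : (Set.univ : Set P.Ev) ∉ P.boxes)
    (htwo : ∃ e f : P.Ev, e ≠ f)
    (h2 : ¬ hasP2 P) (h3 : ¬ hasP3 P) (h4 : ¬ hasP4 P)
    (hA : ∃ S : Set P.Ev, NonTrivial P S ∧ Isolated P S) :
    ∃ S : Set P.Ev, NonTrivial P S ∧ Isolated P S ∧ Nested P S := by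
  classical
  haveI := hfin
  obtain ⟨S0, hS0nt, hS0iso⟩ := hA
  -- comparability relation and its equivalence closure
  set R : P.Ev → P.Ev → Prop := fun a b => P.le a b ∨ P.le b a with hR
  set Conn : P.Ev → P.Ev → Prop := Relation.EqvGen R with hConnDef
  -- Consequences of forbidden patterns P3 and P4
  have hP3' : ∀ B ∈ P.boxes, ∀ f, f ∉ B → ∀ e ∈ B, P.le f e → ∀ e' ∈ B, P.le f e' := by
    intro B hB f hf e he hle e' he'
    by_contra h
    exact h3 ⟨B, f, e, e', hB, hf, he, he', hle, h⟩
  have hP4' : ∀ B ∈ P.boxes, ∀ f, f ∉ B → ∀ e ∈ B, P.le e f → ∀ e' ∈ B, P.le e' f := by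
    intro B hB f hf e he hle e' he'
    by_contra h
    exact h4 ⟨B, f, e, e', hB, hf, he, he', hle, h⟩
  -- Isolated sets are closed under Conn
  have hconn_iff : ∀ S : Set P.Ev, Isolated P S → ∀ e f, Conn e f → (e ∈ S ↔ f ∈ S) := by
    intro S hS e f h
    induction h with
    | rel a b hab =>
      constructor
      · intro ha
        by_contra hb
        rcases hab with h' | h'
        · exact (hS a ha b hb).1 h'
        · exact (hS a ha b hb).2 h'
      · intro hb
        by_contra ha
        rcases hab with h' | h'
        · exact (hS b hb a ha).2 h'
        · exact (hS b hb a ha).1 h'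
    | refl a => exact Iff.rfl
    | symm a b _ ih => exact ih.symm
    | trans a b c _ _ ih1 ih2 => exact ih1.trans ih2
  -- Dichotomy for boxes: either all events are connected, or the box is isolated
  have dich : ∀ B ∈ P.boxes, (∀ e ∈ B, ∀ e' ∈ B, Conn e e') ∨ Isolated P B := by
    intro B hB
    by_contra h
    push_neg at h
    obtain ⟨⟨e, he, e', he', hne⟩, hniso⟩ := h
    have hniso' : ∃ x ∈ B, ∃ y, y ∉ B ∧ ¬(¬ P.le x y ∧ ¬ P.le y x) := by
      by_contra hc
      push_neg at hc
      exact hniso (fun x hx y hy => hc x hx y hy)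
    obtain ⟨x, hx, y, hy, hxy⟩ := hniso'
    rw [not_and_or, not_not, not_not] at hxy
    rcases hxy with h' | h'
    · -- le x y : by ¬P4 everything in B is below y
      have h1 : P.le e y := hP4' B hB y hy x hx h' e he
      have h2 : P.le e' y := hP4' B hB y hy x hx h' e' he'
      exact hne (Relation.EqvGen.trans _ _ _ (Relation.EqvGen.rel _ _ (Or.inl h1))
        (Relation.EqvGen.symm _ _ (Relation.EqvGen.rel _ _ (Or.inl h2))))
    · -- le y x : by ¬P3 y is below everything in B
      have h1 : P.le y e := hP3' B hB y hy x hx h' e he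
      have h2 : P.le y e' := hP3' B hB y hy x hx h' e' he'
      exact hne (Relation.EqvGen.trans _ _ _ (Relation.EqvGen.rel _ _ (Or.inr h1))
        (Relation.EqvGen.symm _ _ (Relation.EqvGen.rel _ _ (Or.inr h2))))
  by_cases hiso : ∃ B ∈ P.boxes, Isolated P B
  · -- take a maximal isolated box
    set F : Set (Set P.Ev) := {B | B ∈ P.boxes ∧ Isolated P B} with hF
    have hFfin : F.Finite := Set.toFinite _
    have hFne : F.Nonempty := by
      obtain ⟨B, hB, hBiso⟩ := hiso
      exact ⟨B, hB, hBiso⟩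
    obtain ⟨Bm, hBm, hmax⟩ := hFfin.exists_maximalFor id F hFne
    refine ⟨Bm, ⟨?_, ?_⟩, hBm.2, ?_⟩
    · exact (Set.nonempty_iff_ne_empty.mp (P.boxes_ne Bm hBm.1))
    · intro h
      exact hbox (h ▸ hBm.1)
    · intro C hC
      rcases dich C hC with hcc | hciso
      · by_cases hint : (C ∩ Bm).Nonempty
        · left
          obtain ⟨x, hxC, hxB⟩ := hint
          intro c hc
          exact (hconn_iff Bm hBm.2 c x (hcc c hc x hxC)).mpr hxB
        · right
          exact Set.not_nonempty_iff_eq_empty.mp hint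
      · by_cases hd : C ∩ Bm = ∅
        · right; exact hd
        · left
          obtain ⟨x, hxC, hxB⟩ := Set.nonempty_iff_ne_empty.mpr hd
          intro c hc
          by_contra hcB
          -- either Bm ⊆ C, contradicting maximality, or we exhibit P2
          by_cases hsub : Bm ⊆ C
          · have : Bm = C := le_antisymm hsub (hmax (j := C) ⟨hC, hciso⟩ hsub)
            exact hcB (this ▸ hc)
          · obtain ⟨b, hbB, hbC⟩ := Set.not_subset.mp hsub
            exact h2 ⟨C, Bm, c, x, b, hC, hBm.1, ⟨hc, hcB⟩, ⟨hxC, hxB⟩, ⟨hbB, hbC⟩⟩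
  · -- no isolated box: take the connected component of a point of S0
    push_neg at hiso
    obtain ⟨e0, he0⟩ := Set.nonempty_iff_ne_empty.mpr hS0nt.1
    obtain ⟨f0, hf0⟩ : ∃ f, f ∉ S0 := by
      by_contra hc
      push_neg at hc
      exact hS0nt.2 (Set.eq_univ_of_forall hc)
    refine ⟨{f | Conn e0 f}, ⟨?_, ?_⟩, ?_, ?_⟩
    · intro h
      have : e0 ∈ ({f | Conn e0 f} : Set P.Ev) := Relation.EqvGen.refl e0
      rw [h] at this
      exact this
    · intro h
      have : f0 ∈ ({f | Conn e0 f} : Set P.Ev) := by rw [h]; trivial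
      exact hf0 ((hconn_iff S0 hS0iso e0 f0 this).mp he0)
    · intro e he f hf
      constructor
      · intro hle
        exact hf (Relation.EqvGen.trans _ _ _ he (Relation.EqvGen.rel _ _ (Or.inl hle)))
      · intro hle
        exact hf (Relation.EqvGen.trans _ _ _ he (Relation.EqvGen.rel _ _ (Or.inr hle)))
    · intro C hC
      rcases dich C hC with hcc | hciso
      · by_cases hint : (C ∩ {f | Conn e0 f}).Nonempty
        · left
          obtain ⟨x, hxC, hxS⟩ := hint
          intro c hc
          exact Relation.EqvGen.trans _ _ _ hxS (hcc x hxC c hc)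
        · right
          exact Set.not_nonempty_iff_eq_empty.mp hint
      · exact absurd hciso (hiso C hC)
end

section
/- A finite pomset with boxes is series–parallel (the interpretation of some term over 1, atoms, sequencing, parallel, and boxing) if and only if it contains none of the four forbidden patterns P1, P2, P3, P4. -/
namespace SPaux

variable {X : Type}

/-- Reachability under a relation. -/
def Reach (adj : X → X → Prop) : X → X → Prop := Relation.ReflTransGen adj

/-- Complement adjacency. -/
def coadj (adj : X → X → Prop) (x y : X) : Prop := x ≠ y ∧ ¬ adj x y

def P4Free (adj : X → X → Prop) : Prop :=
  ∀ a b c d, adj a b → adj b c → adj c d → ¬ adj a c → ¬ adj a d → ¬ adj b d → False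

lemma reach_symm {adj : X → X → Prop} (hs : ∀ x y, adj x y → adj y x) {x y : X}
    (h : Reach adj x y) : Reach adj y x := by
  induction h with
  | refl => exact Relation.ReflTransGen.refl
  | tail hstep ih ih2 => exact Relation.ReflTransGen.head (hs _ _ ih) ih2

lemma reach_only {r : X → X → Prop} {x : X} (h : ∀ z, ¬ r x z) {w : X}
    (hr : Reach r x w) : w = x := by
  rcases Relation.ReflTransGen.cases_head hr with rfl | ⟨c, hc, _⟩
  · rfl
  · exact absurd hc (h c)

lemma coadj_symm {adj : X → X → Prop} (hs : ∀ x y, adj x y → adj y x) :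
    ∀ x y, coadj adj x y → coadj adj y x :=
  fun _ _ h => ⟨h.1.symm, fun ha => h.2 (hs _ _ ha)⟩

lemma coadj_irr {adj : X → X → Prop} : ∀ x, ¬ coadj adj x x := fun _ h => h.1 rfl

lemma P4Free.coadj {adj : X → X → Prop} (hs : ∀ x y, adj x y → adj y x)
    (hP4 : P4Free adj) : P4Free (coadj adj) := by
  intro a b c d hab hbc hcd hac had hbd
  rcases eq_or_ne a c with rfl | hac'
  · exact had hcd
  rcases eq_or_ne b d with rfl | hbd'
  · exact had hab
  rcases eq_or_ne a d with rfl | had'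
  · exact hac (coadj_symm hs _ _ hcd)
  have Aac : adj a c := by
    by_contra h; exact hac ⟨hac', h⟩
  have Aad : adj a d := by
    by_contra h; exact had ⟨had', h⟩
  have Abd : adj b d := by
    by_contra h; exact hbd ⟨hbd', h⟩
  exact hP4 b d a c Abd (hs _ _ Aad) Aac
    (fun h => hab.2 (hs _ _ h)) hbc.2 (fun h => hcd.2 (hs _ _ h))

section key

variable (adj : X → X → Prop) (v : X)

/-- The restriction of `adj` to the complement of `v`. -/
abbrev radj (a b : {z : X // z ≠ v}) : Prop := adj a.1 b.1

lemma key (hs : ∀ x y, adj x y → adj y x) (hP4 : P4Free adj)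
    (hconn : ∀ z w : X, Reach adj z w)
    (u w : {z : X // z ≠ v}) (hdisc : ¬ Reach (radj adj v) u w) :
    ∀ t : X, t ≠ v → adj t v := by
  intro t ht
  by_contra htv
  have hs' : ∀ a b : {z : X // z ≠ v}, radj adj v a b → radj adj v b a := fun a b h => hs _ _ h
  -- every vertex of {z : X // z ≠ v} reaches (within {z : X // z ≠ v}) a neighbour of v
  have nbr : ∀ z : {z : X // z ≠ v}, ∃ z' : {z : X // z ≠ v}, adj z'.1 v ∧ Reach (radj adj v) z z' := by
    intro z
    have hr : Reach adj z.1 v := hconn z.1 v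
    have aux : ∀ a : X, Reach adj a v → ∀ ha : a ≠ v,
        ∃ z' : {z : X // z ≠ v}, adj z'.1 v ∧ Reach (radj adj v) ⟨a, ha⟩ z' := by
      intro a hra
      induction hra using Relation.ReflTransGen.head_induction_on with
      | refl => intro ha; exact absurd rfl ha
      | head hstep _ ih =>
        rename_i a' c _
        intro ha
        by_cases hc : c = v
        · exact ⟨⟨a', ha⟩, hc ▸ hstep, Relation.ReflTransGen.refl⟩
        · obtain ⟨z', hz1, hz2⟩ := ih hc
          exact ⟨z', hz1, Relation.ReflTransGen.head hstep hz2⟩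
    exact aux z.1 hr z.2
  -- boundary pair on a path from a non-neighbour to a neighbour
  have boundary : ∀ s e : {z : X // z ≠ v}, Reach (radj adj v) s e → ¬ adj s.1 v → adj e.1 v →
      ∃ p q : {z : X // z ≠ v}, radj adj v p q ∧ ¬ adj p.1 v ∧ adj q.1 v ∧
        Reach (radj adj v) s p ∧ Reach (radj adj v) s q := by
    intro s e hre
    induction hre using Relation.ReflTransGen.head_induction_on with
    | refl => intro h1 h2; exact absurd h2 h1
    | head hstep hrest ih =>
      rename_i s' c
      intro h1 h2
      by_cases hc : adj c.1 v
      · exact ⟨s', c, hstep, h1, hc, Relation.ReflTransGen.refl,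
          Relation.ReflTransGen.single hstep⟩
      · obtain ⟨p, q, h3, h4, h5, h6, h7⟩ := ih hc h2
        exact ⟨p, q, h3, h4, h5, Relation.ReflTransGen.head hstep h6,
          Relation.ReflTransGen.head hstep h7⟩
  -- a component not containing t
  have hc : ∃ c : {z : X // z ≠ v}, ¬ Reach (radj adj v) (⟨t, ht⟩ : {z : X // z ≠ v}) c := by
    by_cases h1 : Reach (radj adj v) (⟨t, ht⟩ : {z : X // z ≠ v}) u
    · refine ⟨w, fun h2 => hdisc ?_⟩
      exact Relation.ReflTransGen.trans (reach_symm hs' h1) h2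
    · exact ⟨u, h1⟩
  obtain ⟨c, hc⟩ := hc
  obtain ⟨z₁, hz₁v, hz₁r⟩ := nbr (⟨t, ht⟩ : {z : X // z ≠ v})
  obtain ⟨z₂, hz₂v, hz₂r⟩ := nbr c
  have h2 : ¬ Reach (radj adj v) (⟨t, ht⟩ : {z : X // z ≠ v}) z₂ := fun h =>
    hc (Relation.ReflTransGen.trans h (reach_symm hs' hz₂r))
  obtain ⟨p, q, hpq, hpv, hqv, hrp, hrq⟩ := boundary (⟨t, ht⟩ : {z : X // z ≠ v}) z₁ hz₁r htv hz₁v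
  refine hP4 p.1 q.1 v z₂.1 hpq hqv (hs _ _ hz₂v) hpv ?_ ?_
  · intro h
    exact h2 (Relation.ReflTransGen.trans hrp (Relation.ReflTransGen.single h))
  · intro h
    exact h2 (Relation.ReflTransGen.trans hrq (Relation.ReflTransGen.single h))

end key

lemma seinsche_aux : ∀ n (X : Type) (_ : Finite X) (adj : X → X → Prop),
    Nat.card X ≤ n → (∀ x y, adj x y → adj y x) → (∀ x, ¬ adj x x) → P4Free adj →
    ∀ x y : X, x ≠ y →
    (∃ u w : X, ¬ Reach adj u w) ∨ (∃ u w : X, ¬ Reach (coadj adj) u w) := by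
  intro n
  induction n using Nat.strong_induction_on with
  | _ n IH =>
    intro X hfin adj hcard hs hirr hP4 x y hxy
    by_cases hall : ∀ z : X, z = x ∨ z = y
    · by_cases hadj : adj x y
      · refine Or.inr ⟨x, y, fun hr => ?_⟩
        have : y = x := reach_only (fun z hz => by
          rcases hall z with h | h
          · exact hz.1 h.symm
          · rw [h] at hz; exact hz.2 hadj) hr
        exact hxy this.symm
      · refine Or.inl ⟨x, y, fun hr => ?_⟩
        have : y = x := reach_only (fun z hz => by
          rcases hall z with h | h
          · rw [h] at hz; exact hirr x hz
          · rw [h] at hz; exact hadj hz) hr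
        exact hxy this.symm
    · push_neg at hall
      obtain ⟨v, hvx, hvy⟩ := hall
      have hcard' : Nat.card {z : X // z ≠ v} < n := by
        have h1 : Nat.card {z : X // z ≠ v} < Nat.card X :=
          Finite.card_subtype_lt (x := v) (by simp)
        omega
      have hxv : x ≠ v := hvx.symm
      have hyv : y ≠ v := hvy.symm
      have hx'y' : (⟨x, hxv⟩ : {z : X // z ≠ v}) ≠ ⟨y, hyv⟩ := fun h => hxy (congrArg Subtype.val h)
      have hD := IH (Nat.card {z : X // z ≠ v}) hcard' {z : X // z ≠ v} inferInstance (radj adj v) le_rfl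
        (fun a b h => hs _ _ h) (fun a h => hirr _ h)
        (fun a b c d h1 h2 h3 h4 h5 h6 => hP4 _ _ _ _ h1 h2 h3 h4 h5 h6)
        ⟨x, hxv⟩ ⟨y, hyv⟩ hx'y'
      rcases hD with ⟨u, w, hdisc⟩ | ⟨u, w, hdisc⟩
      · by_cases hconn : ∀ z w : X, Reach adj z w
        · have hall2 := key adj v hs hP4 hconn u w hdisc
          refine Or.inr ⟨v, x, fun hr => ?_⟩
          have : x = v := reach_only (fun z hz => by
            rcases eq_or_ne z v with h | hzv
            · exact hz.1 h.symm
            · exact hz.2 (hs _ _ (hall2 z hzv))) hr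
          exact hxv this
        · push_neg at hconn
          obtain ⟨z, w', hzw⟩ := hconn
          exact Or.inl ⟨z, w', hzw⟩
      · -- coadj case
        by_cases hconn : ∀ z w : X, Reach (coadj adj) z w
        · have hdisc' : ¬ Reach (radj (coadj adj) v) u w := by
            intro h
            apply hdisc
            refine Relation.ReflTransGen.mono ?_ _ _ h
            intro a b hab
            exact ⟨fun he => hab.1 (congrArg Subtype.val he), hab.2⟩
          have hall2 := key (coadj adj) v (coadj_symm hs) (hP4.coadj hs) hconn u w hdisc'
          refine Or.inl ⟨v, x, fun hr => ?_⟩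
          have : x = v := reach_only (fun z hz => by
            rcases eq_or_ne z v with h | hzv
            · rw [h] at hz; exact hirr v hz
            · exact (hall2 z hzv).2 (hs _ _ hz)) hr
          exact hxv this
        · push_neg at hconn
          obtain ⟨z, w', hzw⟩ := hconn
          exact Or.inr ⟨z, w', hzw⟩

/-- Seinsche's theorem: a finite P4-free graph with at least two vertices is
disconnected or co-disconnected, phrased via splits. -/
lemma seinsche (X : Type) (hfin : Finite X) (adj : X → X → Prop)
    (hs : ∀ x y, adj x y → adj y x) (hirr : ∀ x, ¬ adj x x) (hP4 : P4Free adj)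
    (x y : X) (hxy : x ≠ y) :
    (∃ S : Set X, S.Nonempty ∧ S ≠ Set.univ ∧ ∀ u ∈ S, ∀ w ∉ S, ¬ adj u w) ∨
    (∃ S : Set X, S.Nonempty ∧ S ≠ Set.univ ∧ ∀ u ∈ S, ∀ w ∉ S, adj u w) := by
  rcases seinsche_aux (Nat.card X) X hfin adj le_rfl hs hirr hP4 x y hxy with
    ⟨u, w, h⟩ | ⟨u, w, h⟩
  · refine Or.inl ⟨{z | Reach adj u z}, ⟨u, Relation.ReflTransGen.refl⟩, ?_, ?_⟩
    · intro he
      apply h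
      have hw : w ∈ (Set.univ : Set X) := Set.mem_univ w
      rw [← he] at hw
      exact hw
    · intro p hp q hq hadj
      exact hq (Relation.ReflTransGen.tail hp hadj)
  · refine Or.inr ⟨{z | Reach (coadj adj) u z}, ⟨u, Relation.ReflTransGen.refl⟩, ?_, ?_⟩
    · intro he
      have : w ∈ {z | Reach (coadj adj) u z} := by rw [he]; trivial
      exact h this
    · intro p hp q hq
      by_contra hadj
      have hpq : p ≠ q := fun he => hq (he ▸ hp)
      exact hq (Relation.ReflTransGen.tail hp ⟨hpq, hadj⟩)

end SPaux
section EasyDirection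

variable {A : Type}

/-- Patterns transfer along homs that reflect order and boxes. -/
lemma hasP1_transfer {P Q : PB A} (φ : Hom P Q) (hor : φ.OrdRefl) :
    hasP1 P → hasP1 Q := by
  rintro ⟨e1, e2, e3, e4, h13, h23, h24, h14, h21, h43⟩
  exact ⟨φ.toFun e1, φ.toFun e2, φ.toFun e3, φ.toFun e4,
    φ.mono _ _ h13, φ.mono _ _ h23, φ.mono _ _ h24,
    fun h => h14 (hor _ _ h), fun h => h21 (hor _ _ h), fun h => h43 (hor _ _ h)⟩

lemma mem_image_iff_of_inj {α β : Type*} {f : α → β} (hf : Function.Injective f)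
    {S : Set α} {x : α} : f x ∈ f '' S ↔ x ∈ S := by
  constructor
  · rintro ⟨y, hy, he⟩; rwa [← hf he]
  · exact fun h => ⟨x, h, rfl⟩

lemma hasP2_transfer {P Q : PB A} (φ : Hom P Q) : hasP2 P → hasP2 Q := by
  rintro ⟨Bx, Cx, e1, e2, e3, hB, hC, h1, h2, h3⟩
  have hinj := φ.bij.1
  refine ⟨φ.toFun '' Bx, φ.toFun '' Cx, φ.toFun e1, φ.toFun e2, φ.toFun e3,
    φ.box_pres _ hB, φ.box_pres _ hC, ?_, ?_, ?_⟩
  · exact ⟨(mem_image_iff_of_inj hinj).2 h1.1, fun h => h1.2 ((mem_image_iff_of_inj hinj).1 h)⟩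
  · exact ⟨(mem_image_iff_of_inj hinj).2 h2.1, (mem_image_iff_of_inj hinj).2 h2.2⟩
  · exact ⟨(mem_image_iff_of_inj hinj).2 h3.1, fun h => h3.2 ((mem_image_iff_of_inj hinj).1 h)⟩

lemma hasP3_transfer {P Q : PB A} (φ : Hom P Q) (hor : φ.OrdRefl) :
    hasP3 P → hasP3 Q := by
  rintro ⟨Bx, e1, e2, e3, hB, h1, h2, h3, h12, h13⟩
  have hinj := φ.bij.1
  exact ⟨φ.toFun '' Bx, φ.toFun e1, φ.toFun e2, φ.toFun e3, φ.box_pres _ hB,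
    fun h => h1 ((mem_image_iff_of_inj hinj).1 h),
    (mem_image_iff_of_inj hinj).2 h2, (mem_image_iff_of_inj hinj).2 h3,
    φ.mono _ _ h12, fun h => h13 (hor _ _ h)⟩

lemma hasP4_transfer {P Q : PB A} (φ : Hom P Q) (hor : φ.OrdRefl) :
    hasP4 P → hasP4 Q := by
  rintro ⟨Bx, e1, e2, e3, hB, h1, h2, h3, h21, h31⟩
  have hinj := φ.bij.1
  exact ⟨φ.toFun '' Bx, φ.toFun e1, φ.toFun e2, φ.toFun e3, φ.box_pres _ hB,
    fun h => h1 ((mem_image_iff_of_inj hinj).1 h),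
    (mem_image_iff_of_inj hinj).2 h2, (mem_image_iff_of_inj hinj).2 h3,
    φ.mono _ _ h21, fun h => h31 (hor _ _ h)⟩

/-- semT avoids all four patterns. -/
lemma semT_noP1 (t : Term A) : ¬ hasP1 (semT t) := by
  induction t with
  | one => rintro ⟨e1, _, _, _, _⟩; exact e1.elim
  | atom a => rintro ⟨e1, e2, e3, e4, h13, h23, h24, h14, _⟩; exact h14 trivial
  | seq s t ihs iht =>
    rintro ⟨e1, e2, e3, e4, h13, h23, h24, h14, h21, h43⟩
    rcases e1 with a1 | a1 <;> rcases e2 with a2 | a2 <;> rcases e3 with a3 | a3 <;>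
      rcases e4 with a4 | a4 <;> simp_all [semT, seqPB, seqLE]
    · exact ihs ⟨a1, a2, a3, a4, h13, h23, h24, h14, h21, h43⟩
    · exact iht ⟨a1, a2, a3, a4, h13, h23, h24, h14, h21, h43⟩
  | par s t ihs iht =>
    rintro ⟨e1, e2, e3, e4, h13, h23, h24, h14, h21, h43⟩
    rcases e1 with a1 | a1 <;> rcases e2 with a2 | a2 <;> rcases e3 with a3 | a3 <;>
      rcases e4 with a4 | a4 <;> simp_all [semT, parPB, parLE]
    · exact ihs ⟨a1, a2, a3, a4, h13, h23, h24, h14, h21, h43⟩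
    · exact iht ⟨a1, a2, a3, a4, h13, h23, h24, h14, h21, h43⟩
  | box s ih =>
    rintro ⟨e1, e2, e3, e4, h⟩
    exact ih ⟨e1, e2, e3, e4, h⟩

end EasyDirection
section EasyDirection2

variable {A : Type}

lemma not_inr_mem_inl {α β : Type} {B : Set α} {x : β} :
    Sum.inr x ∉ Sum.inl '' B := by rintro ⟨b, _, h⟩; cases h

lemma not_inl_mem_inr {α β : Type} {B : Set β} {x : α} :
    Sum.inl x ∉ Sum.inr '' B := by rintro ⟨b, _, h⟩; cases h

lemma inl_mem_inl {α β : Type} {B : Set α} {x : α} :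
    (Sum.inl x : α ⊕ β) ∈ Sum.inl '' B ↔ x ∈ B :=
  mem_image_iff_of_inj Sum.inl_injective

lemma inr_mem_inr {α β : Type} {B : Set β} {x : β} :
    (Sum.inr x : α ⊕ β) ∈ Sum.inr '' B ↔ x ∈ B :=
  mem_image_iff_of_inj Sum.inr_injective

lemma semT_noP2 (t : Term A) : ¬ hasP2 (semT t) := by
  induction t with
  | one => rintro ⟨Bx, Cx, e1, _, _, hB, _⟩; exact hB
  | atom a => rintro ⟨Bx, Cx, e1, _, _, hB, _⟩; exact hB
  | seq s t ihs iht =>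
    rintro ⟨Bx, Cx, e1, e2, e3, hB, hC, h1, h2, h3⟩
    rcases hB with ⟨B, hB, rfl⟩ | ⟨B, hB, rfl⟩ <;>
      rcases hC with ⟨C, hC, rfl⟩ | ⟨C, hC, rfl⟩
    · obtain ⟨b1, hb1, rfl⟩ := h1.1
      obtain ⟨b2, hb2, rfl⟩ := h2.1
      obtain ⟨b3, hb3, rfl⟩ := h3.1
      exact ihs ⟨B, C, b1, b2, b3, hB, hC,
        ⟨hb1, fun h => h1.2 (inl_mem_inl.2 h)⟩,
        ⟨hb2, inl_mem_inl.1 h2.2⟩,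
        ⟨inl_mem_inl.1 h3.1, fun h => h3.2 (inl_mem_inl.2 h)⟩⟩
    · obtain ⟨b2, hb2, he⟩ := h2.2
      obtain ⟨b2', hb2', rfl⟩ := h2.1
      cases he
    · obtain ⟨b2, hb2, he⟩ := h2.1
      obtain ⟨b2', hb2', rfl⟩ := h2.2
      cases he
    · obtain ⟨b1, hb1, rfl⟩ := h1.1
      obtain ⟨b2, hb2, rfl⟩ := h2.1
      obtain ⟨b3, hb3, rfl⟩ := h3.1
      exact iht ⟨B, C, b1, b2, b3, hB, hC,
        ⟨hb1, fun h => h1.2 (inr_mem_inr.2 h)⟩,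
        ⟨hb2, inr_mem_inr.1 h2.2⟩,
        ⟨inr_mem_inr.1 h3.1, fun h => h3.2 (inr_mem_inr.2 h)⟩⟩
  | par s t ihs iht =>
    rintro ⟨Bx, Cx, e1, e2, e3, hB, hC, h1, h2, h3⟩
    rcases hB with ⟨B, hB, rfl⟩ | ⟨B, hB, rfl⟩ <;>
      rcases hC with ⟨C, hC, rfl⟩ | ⟨C, hC, rfl⟩
    · obtain ⟨b1, hb1, rfl⟩ := h1.1
      obtain ⟨b2, hb2, rfl⟩ := h2.1
      obtain ⟨b3, hb3, rfl⟩ := h3.1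
      exact ihs ⟨B, C, b1, b2, b3, hB, hC,
        ⟨hb1, fun h => h1.2 (inl_mem_inl.2 h)⟩,
        ⟨hb2, inl_mem_inl.1 h2.2⟩,
        ⟨inl_mem_inl.1 h3.1, fun h => h3.2 (inl_mem_inl.2 h)⟩⟩
    · obtain ⟨b2, hb2, he⟩ := h2.2
      obtain ⟨b2', hb2', rfl⟩ := h2.1
      cases he
    · obtain ⟨b2, hb2, he⟩ := h2.1
      obtain ⟨b2', hb2', rfl⟩ := h2.2
      cases he
    · obtain ⟨b1, hb1, rfl⟩ := h1.1
      obtain ⟨b2, hb2, rfl⟩ := h2.1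
      obtain ⟨b3, hb3, rfl⟩ := h3.1
      exact iht ⟨B, C, b1, b2, b3, hB, hC,
        ⟨hb1, fun h => h1.2 (inr_mem_inr.2 h)⟩,
        ⟨hb2, inr_mem_inr.1 h2.2⟩,
        ⟨inr_mem_inr.1 h3.1, fun h => h3.2 (inr_mem_inr.2 h)⟩⟩
  | box s ih =>
    rintro ⟨Bx, Cx, e1, e2, e3, hB, hC, h1, h2, h3⟩
    rcases hB with hB | ⟨hBu, -⟩
    · rcases hC with hC | ⟨hCu, -⟩
      · exact ih ⟨Bx, Cx, e1, e2, e3, hB, hC, h1, h2, h3⟩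
      · exact h1.2 (hCu ▸ Set.mem_univ e1)
    · exact h3.2 (hBu ▸ Set.mem_univ e3)

lemma semT_noP3 (t : Term A) : ¬ hasP3 (semT t) := by
  induction t with
  | one => rintro ⟨Bx, e1, _, _, hB, _⟩; exact hB
  | atom a => rintro ⟨Bx, e1, _, _, hB, _⟩; exact hB
  | seq s t ihs iht =>
    rintro ⟨Bx, e1, e2, e3, hB, h1, h2, h3, h12, h13⟩
    rcases hB with ⟨B, hB, rfl⟩ | ⟨B, hB, rfl⟩
    · obtain ⟨b2, hb2, rfl⟩ := h2
      obtain ⟨b3, hb3, rfl⟩ := h3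
      rcases e1 with a1 | a1
      · exact ihs ⟨B, a1, b2, b3, hB, fun h => h1 (inl_mem_inl.2 h), hb2, hb3, h12, h13⟩
      · exact h12
    · obtain ⟨b2, hb2, rfl⟩ := h2
      obtain ⟨b3, hb3, rfl⟩ := h3
      rcases e1 with a1 | a1
      · exact h13 trivial
      · exact iht ⟨B, a1, b2, b3, hB, fun h => h1 (inr_mem_inr.2 h), hb2, hb3, h12, h13⟩
  | par s t ihs iht =>
    rintro ⟨Bx, e1, e2, e3, hB, h1, h2, h3, h12, h13⟩
    rcases hB with ⟨B, hB, rfl⟩ | ⟨B, hB, rfl⟩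
    · obtain ⟨b2, hb2, rfl⟩ := h2
      obtain ⟨b3, hb3, rfl⟩ := h3
      rcases e1 with a1 | a1
      · exact ihs ⟨B, a1, b2, b3, hB, fun h => h1 (inl_mem_inl.2 h), hb2, hb3, h12, h13⟩
      · exact h12
    · obtain ⟨b2, hb2, rfl⟩ := h2
      obtain ⟨b3, hb3, rfl⟩ := h3
      rcases e1 with a1 | a1
      · exact h12
      · exact iht ⟨B, a1, b2, b3, hB, fun h => h1 (inr_mem_inr.2 h), hb2, hb3, h12, h13⟩
  | box s ih =>
    rintro ⟨Bx, e1, e2, e3, hB, h1, h2, h3, h12, h13⟩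
    rcases hB with hB | ⟨hBu, -⟩
    · exact ih ⟨Bx, e1, e2, e3, hB, h1, h2, h3, h12, h13⟩
    · exact h1 (hBu ▸ Set.mem_univ e1)

lemma semT_noP4 (t : Term A) : ¬ hasP4 (semT t) := by
  induction t with
  | one => rintro ⟨Bx, e1, _, _, hB, _⟩; exact hB
  | atom a => rintro ⟨Bx, e1, _, _, hB, _⟩; exact hB
  | seq s t ihs iht =>
    rintro ⟨Bx, e1, e2, e3, hB, h1, h2, h3, h21, h31⟩
    rcases hB with ⟨B, hB, rfl⟩ | ⟨B, hB, rfl⟩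
    · obtain ⟨b2, hb2, rfl⟩ := h2
      obtain ⟨b3, hb3, rfl⟩ := h3
      rcases e1 with a1 | a1
      · exact ihs ⟨B, a1, b2, b3, hB, fun h => h1 (inl_mem_inl.2 h), hb2, hb3, h21, h31⟩
      · exact h31 trivial
    · obtain ⟨b2, hb2, rfl⟩ := h2
      obtain ⟨b3, hb3, rfl⟩ := h3
      rcases e1 with a1 | a1
      · exact h21
      · exact iht ⟨B, a1, b2, b3, hB, fun h => h1 (inr_mem_inr.2 h), hb2, hb3, h21, h31⟩
  | par s t ihs iht =>
    rintro ⟨Bx, e1, e2, e3, hB, h1, h2, h3, h21, h31⟩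
    rcases hB with ⟨B, hB, rfl⟩ | ⟨B, hB, rfl⟩
    · obtain ⟨b2, hb2, rfl⟩ := h2
      obtain ⟨b3, hb3, rfl⟩ := h3
      rcases e1 with a1 | a1
      · exact ihs ⟨B, a1, b2, b3, hB, fun h => h1 (inl_mem_inl.2 h), hb2, hb3, h21, h31⟩
      · exact h21
    · obtain ⟨b2, hb2, rfl⟩ := h2
      obtain ⟨b3, hb3, rfl⟩ := h3
      rcases e1 with a1 | a1
      · exact h21
      · exact iht ⟨B, a1, b2, b3, hB, fun h => h1 (inr_mem_inr.2 h), hb2, hb3, h21, h31⟩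
  | box s ih =>
    rintro ⟨Bx, e1, e2, e3, hB, h1, h2, h3, h21, h31⟩
    rcases hB with hB | ⟨hBu, -⟩
    · exact ih ⟨Bx, e1, e2, e3, hB, h1, h2, h3, h21, h31⟩
    · exact h1 (hBu ▸ Set.mem_univ e1)

end EasyDirection2
section IsoMachinery

variable {A : Type}

lemma iso_trans {P Q R : PB A} (h1 : Iso P Q) (h2 : Iso Q R) : Iso P R := by
  obtain ⟨φ, φo, φb⟩ := h1
  obtain ⟨ψ, ψo, ψb⟩ := h2
  refine ⟨⟨ψ.toFun ∘ φ.toFun, ψ.bij.comp φ.bij,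
    fun e => (ψ.lab_eq _).trans (φ.lab_eq e),
    fun e f h => ψ.mono _ _ (φ.mono _ _ h), ?_⟩, ?_, ?_⟩
  · intro B hB
    rw [Set.image_comp]
    exact ψ.box_pres _ (φ.box_pres _ hB)
  · intro e f h
    exact φo _ _ (ψo _ _ h)
  · intro B hB
    rw [Set.image_comp] at hB
    exact φb _ (ψb _ hB)

lemma image_univ_of_bij {α β : Type} {f : α → β} (hf : Function.Bijective f) :
    f '' Set.univ = Set.univ := by
  rw [Set.image_univ, Set.range_eq_univ]
  exact hf.2

lemma iso_box_congr {P Q : PB A} (h : Iso P Q) : Iso (boxPB P) (boxPB Q) := by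
  obtain ⟨φ, φo, φb⟩ := h
  refine ⟨⟨φ.toFun, φ.bij, φ.lab_eq, φ.mono, ?_⟩, φo, ?_⟩
  · rintro B (hB | ⟨rfl, hne⟩)
    · exact Or.inl (φ.box_pres _ hB)
    · exact Or.inr ⟨image_univ_of_bij φ.bij, hne.image _⟩
  · rintro B (hB | ⟨hBu, hne⟩)
    · exact Or.inl (φb _ hB)
    · refine Or.inr ⟨?_, ?_⟩
      · ext x
        refine iff_of_true ?_ trivial
        have : φ.toFun x ∈ φ.toFun '' B := hBu ▸ Set.mem_univ _
        exact (mem_image_iff_of_inj φ.bij.1).1 this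
      · obtain ⟨y, hy⟩ := hne
        obtain ⟨x, hx, rfl⟩ := hy
        exact ⟨x, hx⟩

lemma bij_sumMap {α β γ δ : Type} {f : α → β} {g : γ → δ}
    (hf : Function.Bijective f) (hg : Function.Bijective g) :
    Function.Bijective (Sum.map f g) := by
  constructor
  · intro a b h
    cases a <;> cases b <;> simp only [Sum.map] at h
    · rw [hf.1 (Sum.inl.inj h)]
    · cases h
    · cases h
    · rw [hg.1 (Sum.inr.inj h)]
  · intro b
    cases b with
    | inl b => obtain ⟨a, rfl⟩ := hf.2 b; exact ⟨Sum.inl a, rfl⟩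
    | inr b => obtain ⟨a, rfl⟩ := hg.2 b; exact ⟨Sum.inr a, rfl⟩

lemma sumMap_image_inl {α β γ δ : Type} (f : α → β) (g : γ → δ) (B : Set α) :
    Sum.map f g '' (Sum.inl '' B) = Sum.inl '' (f '' B) := by
  rw [← Set.image_comp, ← Set.image_comp]
  rfl

lemma sumMap_image_inr {α β γ δ : Type} (f : α → β) (g : γ → δ) (B : Set γ) :
    Sum.map f g '' (Sum.inr '' B) = Sum.inr '' (g '' B) := by
  rw [← Set.image_comp, ← Set.image_comp]
  rfl

/-- Box transfer for sum compositions: shared by seq and par. -/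
lemma sum_boxes_pres {P Q P' Q' : PB A} (φ : Hom P P') (ψ : Hom Q Q') :
    ∀ B ∈ (Set.image Sum.inl '' P.boxes) ∪ (Set.image Sum.inr '' Q.boxes),
      Sum.map φ.toFun ψ.toFun '' B ∈
        (Set.image Sum.inl '' P'.boxes) ∪ (Set.image Sum.inr '' Q'.boxes) := by
  rintro B (⟨C, hC, rfl⟩ | ⟨C, hC, rfl⟩)
  · rw [sumMap_image_inl]
    exact Or.inl ⟨_, φ.box_pres _ hC, rfl⟩
  · rw [sumMap_image_inr]
    exact Or.inr ⟨_, ψ.box_pres _ hC, rfl⟩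

lemma sum_boxes_refl {P Q P' Q' : PB A} (φ : Hom P P') (ψ : Hom Q Q')
    (φb : φ.BoxRefl) (ψb : ψ.BoxRefl) :
    ∀ B : Set (P.Ev ⊕ Q.Ev), Sum.map φ.toFun ψ.toFun '' B ∈
        (Set.image Sum.inl '' P'.boxes) ∪ (Set.image Sum.inr '' Q'.boxes) →
      B ∈ (Set.image Sum.inl '' P.boxes) ∪ (Set.image Sum.inr '' Q.boxes) := by
  rintro B (⟨C, hC, hE⟩ | ⟨C, hC, hE⟩)
  · have hBl : B = Sum.inl '' {a | Sum.inl a ∈ B} := by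
      ext x
      cases x with
      | inl a => simp
      | inr a =>
        simp only [Set.mem_image, Set.mem_setOf_eq]
        constructor
        · intro hx
          have : Sum.map φ.toFun ψ.toFun (Sum.inr a) ∈ Sum.inl '' C := hE ▸ ⟨_, hx, rfl⟩
          exact absurd this not_inr_mem_inl
        · rintro ⟨b, _, h⟩; cases h
    refine Or.inl ⟨{a | Sum.inl a ∈ B}, ?_, hBl.symm⟩
    apply φb
    have : Sum.map φ.toFun ψ.toFun '' B = Sum.inl '' (φ.toFun '' {a | Sum.inl a ∈ B}) := by
      rw [hBl, sumMap_image_inl, ← hBl]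
    rw [this] at hE
    rwa [← Set.image_injective.mpr Sum.inl_injective hE.symm] at hC
  · have hBl : B = Sum.inr '' {a | Sum.inr a ∈ B} := by
      ext x
      cases x with
      | inr a => simp
      | inl a =>
        simp only [Set.mem_image, Set.mem_setOf_eq]
        constructor
        · intro hx
          have : Sum.map φ.toFun ψ.toFun (Sum.inl a) ∈ Sum.inr '' C := hE ▸ ⟨_, hx, rfl⟩
          exact absurd this not_inl_mem_inr
        · rintro ⟨b, _, h⟩; cases h
    refine Or.inr ⟨{a | Sum.inr a ∈ B}, ?_, hBl.symm⟩
    apply ψb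
    have : Sum.map φ.toFun ψ.toFun '' B = Sum.inr '' (ψ.toFun '' {a | Sum.inr a ∈ B}) := by
      rw [hBl, sumMap_image_inr, ← hBl]
    rw [this] at hE
    rwa [← Set.image_injective.mpr Sum.inr_injective hE.symm] at hC

lemma iso_seq_congr {P Q P' Q' : PB A} (h1 : Iso P P') (h2 : Iso Q Q') :
    Iso (seqPB P Q) (seqPB P' Q') := by
  obtain ⟨φ, φo, φb⟩ := h1
  obtain ⟨ψ, ψo, ψb⟩ := h2
  refine ⟨⟨Sum.map φ.toFun ψ.toFun, bij_sumMap φ.bij ψ.bij, ?_, ?_,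
    sum_boxes_pres φ ψ⟩, ?_, sum_boxes_refl φ ψ φb ψb⟩
  · intro e; cases e with
    | inl a => exact φ.lab_eq a
    | inr a => exact ψ.lab_eq a
  · intro e f h
    cases e <;> cases f
    · exact φ.mono _ _ h
    · trivial
    · exact h.elim
    · exact ψ.mono _ _ h
  · intro e f h
    cases e <;> cases f
    · exact φo _ _ h
    · trivial
    · exact h.elim
    · exact ψo _ _ h

lemma iso_par_congr {P Q P' Q' : PB A} (h1 : Iso P P') (h2 : Iso Q Q') :
    Iso (parPB P Q) (parPB P' Q') := by
  obtain ⟨φ, φo, φb⟩ := h1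
  obtain ⟨ψ, ψo, ψb⟩ := h2
  refine ⟨⟨Sum.map φ.toFun ψ.toFun, bij_sumMap φ.bij ψ.bij, ?_, ?_,
    sum_boxes_pres φ ψ⟩, ?_, sum_boxes_refl φ ψ φb ψb⟩
  · intro e; cases e with
    | inl a => exact φ.lab_eq a
    | inr a => exact ψ.lab_eq a
  · intro e f h
    cases e <;> cases f
    · exact φ.mono _ _ h
    · exact h.elim
    · exact h.elim
    · exact ψ.mono _ _ h
  · intro e f h
    cases e <;> cases f
    · exact φo _ _ h
    · exact h.elim
    · exact h.elim
    · exact ψo _ _ h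

end IsoMachinery
section Glue

variable {A : Type}

open Classical in
/-- The canonical map from events to the disjoint union given by a subset. -/
noncomputable def splitFun (P : PB A) (S : Set P.Ev) (e : P.Ev) : ↥S ⊕ ↥(Sᶜ) :=
  if h : e ∈ S then .inl ⟨e, h⟩ else .inr ⟨e, h⟩

lemma splitFun_inl {P : PB A} {S : Set P.Ev} {e : P.Ev} (h : e ∈ S) :
    splitFun P S e = .inl ⟨e, h⟩ := dif_pos h

lemma splitFun_inr {P : PB A} {S : Set P.Ev} {e : P.Ev} (h : e ∉ S) :
    splitFun P S e = .inr ⟨e, h⟩ := dif_neg h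

lemma splitFun_bij (P : PB A) (S : Set P.Ev) : Function.Bijective (splitFun P S) := by
  constructor
  · intro a b h
    by_cases ha : a ∈ S <;> by_cases hb : b ∈ S
    · rw [splitFun_inl ha, splitFun_inl hb] at h
      exact congrArg Subtype.val (Sum.inl.inj h)
    · rw [splitFun_inl ha, splitFun_inr hb] at h; cases h
    · rw [splitFun_inr ha, splitFun_inl hb] at h; cases h
    · rw [splitFun_inr ha, splitFun_inr hb] at h
      exact congrArg Subtype.val (Sum.inr.inj h)
  · rintro (⟨e, he⟩ | ⟨e, he⟩)
    · exact ⟨e, splitFun_inl he⟩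
    · exact ⟨e, splitFun_inr he⟩

lemma splitFun_lab (P : PB A) (S : Set P.Ev) (e : P.Ev) :
    Sum.elim (restrictPB P S).lab (restrictPB P Sᶜ).lab (splitFun P S e) = P.lab e := by
  by_cases h : e ∈ S
  · rw [splitFun_inl h]; rfl
  · rw [splitFun_inr h]; rfl

lemma splitFun_image_subset {P : PB A} {S : Set P.Ev} {B : Set P.Ev} (hB : B ⊆ S) :
    splitFun P S '' B = Sum.inl '' {x : ↥S | x.1 ∈ B} := by
  ext x
  constructor
  · rintro ⟨b, hb, rfl⟩
    rw [splitFun_inl (hB hb)]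
    exact ⟨⟨b, hB hb⟩, hb, rfl⟩
  · rintro ⟨⟨a, ha⟩, hmem, rfl⟩
    exact ⟨a, hmem, splitFun_inl ha⟩

lemma splitFun_image_disj {P : PB A} {S : Set P.Ev} {B : Set P.Ev} (hB : B ∩ S = ∅) :
    splitFun P S '' B = Sum.inr '' {x : ↥(Sᶜ) | x.1 ∈ B} := by
  have hB' : ∀ b ∈ B, b ∉ S := by
    intro b hb hbS
    have : b ∈ B ∩ S := ⟨hb, hbS⟩
    rw [hB] at this
    exact this
  ext x
  constructor
  · rintro ⟨b, hb, rfl⟩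
    rw [splitFun_inr (hB' b hb)]
    exact ⟨⟨b, hB' b hb⟩, hb, rfl⟩
  · rintro ⟨⟨a, ha⟩, hmem, rfl⟩
    exact ⟨a, hmem, splitFun_inr ha⟩

lemma val_image_of_subset {P : PB A} {S : Set P.Ev} {B : Set P.Ev} (hB : B ⊆ S) :
    Subtype.val '' {x : ↥S | x.1 ∈ B} = B := by
  ext y
  constructor
  · rintro ⟨⟨a, ha⟩, hm, rfl⟩; exact hm
  · intro hy; exact ⟨⟨y, hB hy⟩, hy, rfl⟩

lemma val_image_of_disj {P : PB A} {S : Set P.Ev} {B : Set P.Ev} (hB : B ∩ S = ∅) :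
    Subtype.val '' {x : ↥(Sᶜ) | x.1 ∈ B} = B := by
  have hB' : ∀ b ∈ B, b ∉ S := by
    intro b hb hbS
    have : b ∈ B ∩ S := ⟨hb, hbS⟩
    rw [hB] at this
    exact this
  ext y
  constructor
  · rintro ⟨⟨a, ha⟩, hm, rfl⟩; exact hm
  · intro hy; exact ⟨⟨y, hB' y hy⟩, hy, rfl⟩

lemma splitFun_box_pres {P : PB A} {S : Set P.Ev} (hNest : Nested P S) :
    ∀ B ∈ P.boxes, splitFun P S '' B ∈
      (Set.image Sum.inl '' (restrictPB P S).boxes) ∪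
      (Set.image Sum.inr '' (restrictPB P Sᶜ).boxes) := by
  intro B hB
  rcases hNest B hB with hsub | hdisj
  · refine Or.inl ⟨{x : ↥S | x.1 ∈ B}, ?_, (splitFun_image_subset hsub).symm⟩
    show Subtype.val '' {x : ↥S | x.1 ∈ B} ∈ P.boxes
    rwa [val_image_of_subset hsub]
  · refine Or.inr ⟨{x : ↥(Sᶜ) | x.1 ∈ B}, ?_, (splitFun_image_disj hdisj).symm⟩
    show Subtype.val '' {x : ↥(Sᶜ) | x.1 ∈ B} ∈ P.boxes
    rwa [val_image_of_disj hdisj]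

lemma splitFun_box_refl {P : PB A} {S : Set P.Ev} :
    ∀ B : Set P.Ev, splitFun P S '' B ∈
      (Set.image Sum.inl '' (restrictPB P S).boxes) ∪
      (Set.image Sum.inr '' (restrictPB P Sᶜ).boxes) → B ∈ P.boxes := by
  rintro B (⟨C, hC, hE⟩ | ⟨C, hC, hE⟩)
  · have hBC : B = Subtype.val '' C := by
      ext b
      constructor
      · intro hb
        have : splitFun P S b ∈ Sum.inl '' C := hE ▸ ⟨b, hb, rfl⟩
        obtain ⟨c, hc, he⟩ := this
        by_cases hbS : b ∈ S
        · rw [splitFun_inl hbS] at he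
          have : c = ⟨b, hbS⟩ := Sum.inl.inj he
          exact ⟨c, hc, by rw [this]⟩
        · rw [splitFun_inr hbS] at he; cases he
      · rintro ⟨c, hc, rfl⟩
        have : Sum.inl c ∈ splitFun P S '' B := hE ▸ ⟨c, hc, rfl⟩
        obtain ⟨b, hb, he⟩ := this
        by_cases hbS : b ∈ S
        · rw [splitFun_inl hbS] at he
          have : (⟨b, hbS⟩ : ↥S) = c := Sum.inl.inj he
          rw [← this]
          exact hb
        · rw [splitFun_inr hbS] at he; cases he
    rw [hBC]
    exact hC
  · have hBC : B = Subtype.val '' C := by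
      ext b
      constructor
      · intro hb
        have : splitFun P S b ∈ Sum.inr '' C := hE ▸ ⟨b, hb, rfl⟩
        obtain ⟨c, hc, he⟩ := this
        by_cases hbS : b ∈ S
        · rw [splitFun_inl hbS] at he; cases he
        · rw [splitFun_inr hbS] at he
          have : c = ⟨b, hbS⟩ := Sum.inr.inj he
          exact ⟨c, hc, by rw [this]⟩
      · rintro ⟨c, hc, rfl⟩
        have : Sum.inr c ∈ splitFun P S '' B := hE ▸ ⟨c, hc, rfl⟩
        obtain ⟨b, hb, he⟩ := this
        by_cases hbS : b ∈ S
        · rw [splitFun_inl hbS] at he; cases he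
        · rw [splitFun_inr hbS] at he
          have : (⟨b, hbS⟩ : ↥(Sᶜ)) = c := Sum.inr.inj he
          rw [← this]
          exact hb
    rw [hBC]
    exact hC

lemma glue_seq (P : PB A) (S : Set P.Ev) (hNest : Nested P S) (hPre : IsPrefix P S) :
    Iso P (seqPB (restrictPB P S) (restrictPB P Sᶜ)) := by
  refine ⟨⟨splitFun P S, splitFun_bij P S, splitFun_lab P S, ?_,
    splitFun_box_pres hNest⟩, ?_, splitFun_box_refl⟩
  · intro e f hef
    show seqLE (restrictPB P S) (restrictPB P Sᶜ) (splitFun P S e) (splitFun P S f)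
    by_cases he : e ∈ S <;> by_cases hf : f ∈ S
    · rw [splitFun_inl he, splitFun_inl hf]; exact hef
    · rw [splitFun_inl he, splitFun_inr hf]; trivial
    · exfalso
      have h1 : P.le f e := hPre f hf e he
      have : f = e := P.le_antisymm _ _ h1 hef
      rw [this] at hf
      exact he hf
    · rw [splitFun_inr he, splitFun_inr hf]; exact hef
  · intro e f hef
    change seqLE (restrictPB P S) (restrictPB P Sᶜ) (splitFun P S e) (splitFun P S f) at hef
    by_cases he : e ∈ S <;> by_cases hf : f ∈ S
    · rw [splitFun_inl he, splitFun_inl hf] at hef; exact hef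
    · exact hPre e he f hf
    · rw [splitFun_inr he, splitFun_inl hf] at hef; exact hef.elim
    · rw [splitFun_inr he, splitFun_inr hf] at hef; exact hef

lemma glue_par (P : PB A) (S : Set P.Ev) (hNest : Nested P S) (hIso : Isolated P S) :
    Iso P (parPB (restrictPB P S) (restrictPB P Sᶜ)) := by
  refine ⟨⟨splitFun P S, splitFun_bij P S, splitFun_lab P S, ?_,
    splitFun_box_pres hNest⟩, ?_, splitFun_box_refl⟩
  · intro e f hef
    show parLE (restrictPB P S) (restrictPB P Sᶜ) (splitFun P S e) (splitFun P S f)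
    by_cases he : e ∈ S <;> by_cases hf : f ∈ S
    · rw [splitFun_inl he, splitFun_inl hf]; exact hef
    · exact absurd hef (hIso e he f hf).1
    · exact absurd hef (hIso f hf e he).2
    · rw [splitFun_inr he, splitFun_inr hf]; exact hef
  · intro e f hef
    change parLE (restrictPB P S) (restrictPB P Sᶜ) (splitFun P S e) (splitFun P S f) at hef
    by_cases he : e ∈ S <;> by_cases hf : f ∈ S
    · rw [splitFun_inl he, splitFun_inl hf] at hef; exact hef
    · rw [splitFun_inl he, splitFun_inr hf] at hef; exact hef.elim
    · rw [splitFun_inr he, splitFun_inl hf] at hef; exact hef.elim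
    · rw [splitFun_inr he, splitFun_inr hf] at hef; exact hef

end Glue
section SmallAndRestrict

variable {A : Type}

/-- Remove the universal box. -/
def unboxPB (P : PB A) : PB A where
  Ev := P.Ev
  le := P.le
  le_refl := P.le_refl
  le_trans := P.le_trans
  le_antisymm := P.le_antisymm
  lab := P.lab
  boxes := P.boxes \ {Set.univ}
  boxes_ne := fun B hB => P.boxes_ne B hB.1

lemma iso_unbox (P : PB A) (h : Set.univ ∈ P.boxes) : Iso P (boxPB (unboxPB P)) := by
  refine ⟨⟨id, Function.bijective_id, fun e => rfl, fun e f hef => hef, ?_⟩,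
    fun e f hef => hef, ?_⟩
  · intro B hB
    show Set.image (id : P.Ev → P.Ev) B ∈ (P.boxes \ {Set.univ} ∪ {B | B = Set.univ ∧ B.Nonempty} : Set (Set P.Ev))
    rw [Set.image_id]
    by_cases hBu : B = Set.univ
    · exact Or.inr ⟨hBu, P.boxes_ne B hB⟩
    · exact Or.inl ⟨hB, hBu⟩
  · intro B hB
    change Set.image (id : P.Ev → P.Ev) B ∈ (P.boxes \ {Set.univ} ∪ {B | B = Set.univ ∧ B.Nonempty} : Set (Set P.Ev)) at hB
    rw [Set.image_id] at hB
    rcases hB with hB | ⟨hBu, -⟩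
    · exact hB.1
    · rw [hBu]; exact h

lemma unbox_noP1 {P : PB A} (h : ¬ hasP1 P) : ¬ hasP1 (unboxPB P) := h

lemma unbox_noP2 {P : PB A} (h : ¬ hasP2 P) : ¬ hasP2 (unboxPB P) := by
  rintro ⟨Bx, Cx, e1, e2, e3, hB, hC, h1, h2, h3⟩
  exact h ⟨Bx, Cx, e1, e2, e3, hB.1, hC.1, h1, h2, h3⟩

lemma unbox_noP3 {P : PB A} (h : ¬ hasP3 P) : ¬ hasP3 (unboxPB P) := by
  rintro ⟨Bx, e1, e2, e3, hB, hr⟩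
  exact h ⟨Bx, e1, e2, e3, hB.1, hr⟩

lemma unbox_noP4 {P : PB A} (h : ¬ hasP4 P) : ¬ hasP4 (unboxPB P) := by
  rintro ⟨Bx, e1, e2, e3, hB, hr⟩
  exact h ⟨Bx, e1, e2, e3, hB.1, hr⟩

lemma restrict_noP1 {P : PB A} {S : Set P.Ev} (h : ¬ hasP1 P) :
    ¬ hasP1 (restrictPB P S) := by
  rintro ⟨e1, e2, e3, e4, h13, h23, h24, h14, h21, h43⟩
  exact h ⟨e1.1, e2.1, e3.1, e4.1, h13, h23, h24, h14, h21, h43⟩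

lemma mem_val_image {α : Type} {S : Set α} {B : Set ↥S} {x : ↥S} :
    x.1 ∈ Subtype.val '' B ↔ x ∈ B := mem_image_iff_of_inj Subtype.val_injective

lemma restrict_noP2 {P : PB A} {S : Set P.Ev} (h : ¬ hasP2 P) :
    ¬ hasP2 (restrictPB P S) := by
  rintro ⟨Bx, Cx, e1, e2, e3, hB, hC, h1, h2, h3⟩
  exact h ⟨Subtype.val '' Bx, Subtype.val '' Cx, e1.1, e2.1, e3.1, hB, hC,
    ⟨mem_val_image.2 h1.1, fun hh => h1.2 (mem_val_image.1 hh)⟩,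
    ⟨mem_val_image.2 h2.1, mem_val_image.2 h2.2⟩,
    ⟨mem_val_image.2 h3.1, fun hh => h3.2 (mem_val_image.1 hh)⟩⟩

lemma restrict_noP3 {P : PB A} {S : Set P.Ev} (h : ¬ hasP3 P) :
    ¬ hasP3 (restrictPB P S) := by
  rintro ⟨Bx, e1, e2, e3, hB, h1, h2, h3, h12, h13⟩
  exact h ⟨Subtype.val '' Bx, e1.1, e2.1, e3.1, hB,
    fun hh => h1 (mem_val_image.1 hh), mem_val_image.2 h2, mem_val_image.2 h3, h12, h13⟩

lemma restrict_noP4 {P : PB A} {S : Set P.Ev} (h : ¬ hasP4 P) :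
    ¬ hasP4 (restrictPB P S) := by
  rintro ⟨Bx, e1, e2, e3, hB, h1, h2, h3, h21, h31⟩
  exact h ⟨Subtype.val '' Bx, e1.1, e2.1, e3.1, hB,
    fun hh => h1 (mem_val_image.1 hh), mem_val_image.2 h2, mem_val_image.2 h3, h21, h31⟩

lemma iso_empty (P : PB A) (h : IsEmpty P.Ev) : Iso P (onePB A) := by
  refine ⟨⟨fun e => (h.false e).elim, ⟨fun a => (h.false a).elim, fun b => b.elim⟩,
    fun e => (h.false e).elim, fun e f => (h.false e).elim, ?_⟩,
    fun e f => (h.false e).elim, fun B hB => hB.elim⟩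
  intro B hB
  obtain ⟨x, -⟩ := P.boxes_ne B hB
  exact (h.false x).elim

lemma iso_single (P : PB A) (hs : Subsingleton P.Ev) (e₀ : P.Ev)
    (hu : Set.univ ∉ P.boxes) : Iso P (atomPB (P.lab e₀)) := by
  have hbox : ∀ B ∈ P.boxes, False := by
    intro B hB
    obtain ⟨x, hx⟩ := P.boxes_ne B hB
    have : B = Set.univ := by
      ext y
      simp only [Set.mem_univ, iff_true]
      rwa [hs.elim y x]
    exact hu (this ▸ hB)
  refine ⟨⟨fun _ => PUnit.unit, ⟨fun a b _ => hs.elim a b, fun b => ⟨e₀, rfl⟩⟩,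
    fun e => congrArg P.lab (hs.elim e₀ e), fun _ _ _ => trivial,
    fun B hB => (hbox B hB).elim⟩,
    ?_, fun B hB => hB.elim⟩
  intro e f _
  rw [hs.elim e f]
  exact P.le_refl f

end SmallAndRestrict
section Split

variable {A : Type}

/-- Comparability. -/
def compR (P : PB A) (x y : P.Ev) : Prop := P.le x y ∨ P.le y x

/-- Same-box equivalence (with equality). -/
def ER (P : PB A) (x y : P.Ev) : Prop := x = y ∨ ∃ B ∈ P.boxes, x ∈ B ∧ y ∈ B

/-- Same class or incomparable. -/
def r2R (P : PB A) (x y : P.Ev) : Prop := ER P x y ∨ ¬ compR P x y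

lemma compR_symm {P : PB A} {x y : P.Ev} (h : compR P x y) : compR P y x := h.symm

lemma ER_refl (P : PB A) (x : P.Ev) : ER P x x := Or.inl rfl

lemma ER_symm {P : PB A} {x y : P.Ev} (h : ER P x y) : ER P y x := by
  rcases h with rfl | ⟨B, hB, h1, h2⟩
  · exact Or.inl rfl
  · exact Or.inr ⟨B, hB, h2, h1⟩

/-- Laminarity of the boxes, from absence of P2. -/
lemma laminar {P : PB A} (h2 : ¬ hasP2 P) {B C : Set P.Ev}
    (hB : B ∈ P.boxes) (hC : C ∈ P.boxes) : B ⊆ C ∨ C ⊆ B ∨ B ∩ C = ∅ := by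
  by_contra h
  push_neg at h
  obtain ⟨hBC, hCB, hI⟩ := h
  rw [Set.not_subset] at hBC hCB
  obtain ⟨e1, he1B, he1C⟩ := hBC
  obtain ⟨e3, he3C, he3B⟩ := hCB
  obtain ⟨e2, he2⟩ := hI
  exact h2 ⟨B, C, e1, e2, e3, hB, hC, ⟨he1B, he1C⟩, he2, ⟨he3C, he3B⟩⟩

lemma ER_trans {P : PB A} (h2 : ¬ hasP2 P) {x y z : P.Ev}
    (h : ER P x y) (h' : ER P y z) : ER P x z := by
  rcases h with rfl | ⟨B, hB, hxB, hyB⟩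
  · exact h'
  rcases h' with rfl | ⟨C, hC, hyC, hzC⟩
  · exact Or.inr ⟨B, hB, hxB, hyB⟩
  rcases laminar h2 hB hC with hs | hs | hs
  · exact Or.inr ⟨C, hC, hs hxB, hzC⟩
  · exact Or.inr ⟨B, hB, hxB, hs hzC⟩
  · exact absurd hs (by
      intro hh
      have : y ∈ B ∩ C := ⟨hyB, hyC⟩
      rw [hh] at this
      exact this)

/-- Box elements behave uniformly towards the outside (no P3/P4). -/
lemma box_module {P : PB A} (h3 : ¬ hasP3 P) (h4 : ¬ hasP4 P) {B : Set P.Ev}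
    (hB : B ∈ P.boxes) {x y z : P.Ev} (hx : x ∈ B) (hy : y ∈ B) (hz : z ∉ B) :
    (P.le z x → P.le z y) ∧ (P.le x z → P.le y z) := by
  constructor
  · intro h
    by_contra hc
    exact h3 ⟨B, z, x, y, hB, hz, hx, hy, h, hc⟩
  · intro h
    by_contra hc
    exact h4 ⟨B, z, x, y, hB, hz, hx, hy, h, hc⟩

/-- comp is invariant under ER on the left, outside the class. -/
lemma comp_ER_invariant {P : PB A} (h2 : ¬ hasP2 P) (h3 : ¬ hasP3 P) (h4 : ¬ hasP4 P)
    {x x' z : P.Ev} (hE : ER P x x') (hnE : ¬ ER P x z) (hc : compR P x z) :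
    compR P x' z := by
  rcases hE with rfl | ⟨B, hB, hxB, hx'B⟩
  · exact hc
  · have hzB : z ∉ B := fun hz => hnE (Or.inr ⟨B, hB, hxB, hz⟩)
    rcases hc with h | h
    · exact Or.inl ((box_module h3 h4 hB hxB hx'B hzB).2 h)
    · exact Or.inr ((box_module h3 h4 hB hxB hx'B hzB).1 h)

/-- One-step transfer of order along r2. -/
lemma step_mod {P : PB A} (h2 : ¬ hasP2 P) (h3 : ¬ hasP3 P) (h4 : ¬ hasP4 P)
    {y y' z : P.Ev} (hr : r2R P y y')
    (hnz : ¬ Relation.ReflTransGen (r2R P) y z) :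
    (P.le y z → P.le y' z) ∧ (P.le z y → P.le z y') := by
  have hnr : ¬ r2R P y z := fun h => hnz (Relation.ReflTransGen.single h)
  have hnr' : ¬ r2R P y' z := fun h =>
    hnz (Relation.ReflTransGen.head hr (Relation.ReflTransGen.single h))
  have hcyz : compR P y z := by
    by_contra hc; exact hnr (Or.inr hc)
  have hcy'z : compR P y' z := by
    by_contra hc; exact hnr' (Or.inr hc)
  rcases hr with hE | hnc
  · rcases hE with rfl | ⟨B, hB, hyB, hy'B⟩
    · exact ⟨id, id⟩
    · have hzB : z ∉ B := fun hz => hnr (Or.inl (Or.inr ⟨B, hB, hyB, hz⟩))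
      exact ⟨(box_module h3 h4 hB hyB hy'B hzB).2, (box_module h3 h4 hB hyB hy'B hzB).1⟩
  · constructor
    · intro h
      rcases hcy'z with h' | h'
      · exact h'
      · exact absurd (Or.inl (P.le_trans _ _ _ h h')) hnc
    · intro h
      rcases hcy'z with h' | h'
      · exact absurd (Or.inr (P.le_trans _ _ _ h' h)) hnc
      · exact h'

lemma r2_symm {P : PB A} : ∀ x y, r2R P x y → r2R P y x := by
  intro x y h
  rcases h with hE | hc
  · exact Or.inl (ER_symm hE)
  · exact Or.inr (fun h' => hc (compR_symm h'))

/-- Transfer of order along r2-paths. -/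
lemma path_mod {P : PB A} (h2 : ¬ hasP2 P) (h3 : ¬ hasP3 P) (h4 : ¬ hasP4 P)
    {y y' : P.Ev} (hr : Relation.ReflTransGen (r2R P) y y') :
    ∀ z, ¬ Relation.ReflTransGen (r2R P) y z →
      (P.le y z → P.le y' z) ∧ (P.le z y → P.le z y') := by
  induction hr with
  | refl => exact fun z _ => ⟨id, id⟩
  | tail hym hstep ih =>
    rename_i m y'
    intro z hz
    have h1 := ih z hz
    have hnm : ¬ Relation.ReflTransGen (r2R P) m z := by
      intro h
      exact hz (Relation.ReflTransGen.trans hym h)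
    have h2' := step_mod h2 h3 h4 hstep hnm
    exact ⟨fun h => h2'.1 (h1.1 h), fun h => h2'.2 (h1.2 h)⟩

/-- Build a prefix split from a disconnection of r2. -/
lemma build_prefix {P : PB A} (h2 : ¬ hasP2 P) (h3 : ¬ hasP3 P) (h4 : ¬ hasP4 P)
    (x w : P.Ev) (hnr : ¬ Relation.ReflTransGen (r2R P) x w) (hle : P.le w x) :
    ∃ S : Set P.Ev, S.Nonempty ∧ S ≠ Set.univ ∧ Nested P S ∧ IsPrefix P S := by
  set S : Set P.Ev := {y | P.le y x ∧ ¬ Relation.ReflTransGen (r2R P) x y} with hS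
  have hScl : ∀ y ∈ S, ∀ y', r2R P y y' → y' ∈ S := by
    intro y hy y' hr
    have hnxy : ¬ Relation.ReflTransGen (r2R P) x y := hy.2
    have hnyx : ¬ Relation.ReflTransGen (r2R P) y x := fun h =>
      hnxy (SPaux.reach_symm r2_symm h)
    refine ⟨(step_mod h2 h3 h4 hr hnyx).1 hy.1, ?_⟩
    intro h
    exact hnxy (Relation.ReflTransGen.trans h
      (Relation.ReflTransGen.single (r2_symm _ _ hr)))
  have hSreach : ∀ y ∈ S, ∀ y', Relation.ReflTransGen (r2R P) y y' → y' ∈ S := by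
    intro y hy y' hr
    induction hr with
    | refl => exact hy
    | tail hr' hstep ih => exact hScl _ ih _ hstep
  refine ⟨S, ⟨w, hle, hnr⟩, ?_, ?_, ?_⟩
  · intro h
    have : x ∈ S := h ▸ Set.mem_univ x
    exact this.2 Relation.ReflTransGen.refl
  · -- Nested
    intro B hB
    by_cases hd : B ∩ S = ∅
    · exact Or.inr hd
    · left
      obtain ⟨y, hyB, hyS⟩ := Set.nonempty_iff_ne_empty.2 hd
      intro y' hy'B
      exact hScl y hyS y' (Or.inl (Or.inr ⟨B, hB, hyB, hy'B⟩))
  · -- IsPrefix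
    intro e he f hf
    by_cases hf1 : Relation.ReflTransGen (r2R P) x f
    · exact (path_mod h2 h3 h4 hf1 e he.2).2 he.1
    · have hnlefx : ¬ P.le f x := fun h => hf ⟨h, hf1⟩
      have hncxf : compR P x f := by
        by_contra hc
        exact hf1 (Relation.ReflTransGen.single (Or.inr hc))
      have hnef : ¬ Relation.ReflTransGen (r2R P) e f := fun h => hf (hSreach e he _ h)
      have hcef : compR P e f := by
        by_contra hc
        exact hnef (Relation.ReflTransGen.single (Or.inr hc))
      rcases hcef with h | h
      · exact h
      · exact absurd (P.le_trans _ _ _ h he.1) hnlefx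

end Split
section SplitMain

variable {A : Type}

lemma exists_split (P : PB A) (hfin : Finite P.Ev)
    (h1 : ¬ hasP1 P) (h2 : ¬ hasP2 P) (h3 : ¬ hasP3 P) (h4 : ¬ hasP4 P)
    (hu : Set.univ ∉ P.boxes) (x₀ y₀ : P.Ev) (hxy : x₀ ≠ y₀) :
    ∃ S : Set P.Ev, S.Nonempty ∧ S ≠ Set.univ ∧ Nested P S ∧
      (Isolated P S ∨ IsPrefix P S) := by
  classical
  let s : Setoid P.Ev := ⟨ER P, ⟨ER_refl P, fun h => ER_symm h, fun h h' => ER_trans h2 h h'⟩⟩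
  have mk_eq : ∀ a b : P.Ev, (Quotient.mk s a = Quotient.mk s b) ↔ ER P a b :=
    fun a b => ⟨fun h => Quotient.exact h, fun h => Quotient.sound h⟩
  have hdir : ∀ a₁ b₁ a₂ b₂ : P.Ev, ER P a₁ a₂ → ER P b₁ b₂ →
      (¬ ER P a₁ b₁ ∧ compR P a₁ b₁) → (¬ ER P a₂ b₂ ∧ compR P a₂ b₂) := by
    intro a₁ b₁ a₂ b₂ ha hb ⟨hnE, hc⟩
    have hnE2 : ¬ ER P a₂ b₂ := fun h =>
      hnE (ER_trans h2 ha (ER_trans h2 h (ER_symm hb)))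
    refine ⟨hnE2, ?_⟩
    have hc2 : compR P a₂ b₁ := comp_ER_invariant h2 h3 h4 ha hnE hc
    have hnE3 : ¬ ER P b₁ a₂ := fun h => hnE (ER_trans h2 ha (ER_symm h))
    exact compR_symm (comp_ER_invariant h2 h3 h4 hb hnE3 (compR_symm hc2))
  let adjQ : Quotient s → Quotient s → Prop :=
    Quotient.lift₂ (fun a b => ¬ ER P a b ∧ compR P a b)
      (fun a₁ b₁ a₂ b₂ ha hb => propext ⟨hdir a₁ b₁ a₂ b₂ ha hb,
        hdir a₂ b₂ a₁ b₁ (ER_symm ha) (ER_symm hb)⟩)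
  have adjQ_mk : ∀ a b : P.Ev,
      adjQ (Quotient.mk s a) (Quotient.mk s b) ↔ (¬ ER P a b ∧ compR P a b) :=
    fun a b => Iff.rfl
  have hsymQ : ∀ q q', adjQ q q' → adjQ q' q := by
    intro q q'
    refine Quotient.inductionOn₂ q q' ?_
    intro a b h
    exact ⟨fun hE => h.1 (ER_symm hE), compR_symm h.2⟩
  have hirrQ : ∀ q, ¬ adjQ q q := by
    intro q
    refine Quotient.inductionOn q ?_
    intro a h
    exact h.1 (ER_refl P a)
  have hP4Q : SPaux.P4Free adjQ := by
    intro qa qb qc qd hab hbc hcd hac had hbd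
    by_cases h_ad : qa = qd
    · rw [← h_ad] at hcd
      exact hac (hsymQ _ _ hcd)
    by_cases h_ac : qa = qc
    · rw [← h_ac] at hcd
      exact had hcd
    by_cases h_bd : qb = qd
    · exact had (h_bd ▸ hab)
    obtain ⟨a, rfl⟩ := Quotient.exists_rep qa
    obtain ⟨b, rfl⟩ := Quotient.exists_rep qb
    obtain ⟨c, rfl⟩ := Quotient.exists_rep qc
    obtain ⟨d, rfl⟩ := Quotient.exists_rep qd
    have hnE_ac : ¬ ER P a c := fun hE => h_ac (Quotient.sound hE)
    have hnE_ad : ¬ ER P a d := fun hE => h_ad (Quotient.sound hE)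
    have hnE_bd : ¬ ER P b d := fun hE => h_bd (Quotient.sound hE)
    have hnc_ac : ¬ compR P a c := fun h => hac ((adjQ_mk a c).2 ⟨hnE_ac, h⟩)
    have hnc_ad : ¬ compR P a d := fun h => had ((adjQ_mk a d).2 ⟨hnE_ad, h⟩)
    have hnc_bd : ¬ compR P b d := fun h => hbd ((adjQ_mk b d).2 ⟨hnE_bd, h⟩)
    have hcab : compR P a b := ((adjQ_mk a b).1 hab).2
    have hcbc : compR P b c := ((adjQ_mk b c).1 hbc).2
    have hccd : compR P c d := ((adjQ_mk c d).1 hcd).2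
    rcases hcab with hle | hle
    · have hcb : P.le c b := by
        rcases hcbc with h | h
        · exact absurd (Or.inl (P.le_trans _ _ _ hle h)) hnc_ac
        · exact h
      have hcd' : P.le c d := by
        rcases hccd with h | h
        · exact h
        · exact absurd (Or.inr (P.le_trans _ _ _ h hcb)) hnc_bd
      exact h1 ⟨a, c, b, d, hle, hcb, hcd',
        fun hh => hnc_ad (Or.inl hh), fun hh => hnc_ac (Or.inr hh),
        fun hh => hnc_bd (Or.inr hh)⟩
    · have hbc' : P.le b c := by
        rcases hcbc with h | h
        · exact h
        · exact absurd (Or.inr (P.le_trans _ _ _ h hle)) hnc_ac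
      have hdc : P.le d c := by
        rcases hccd with h | h
        · exact absurd (Or.inl (P.le_trans _ _ _ hbc' h)) hnc_bd
        · exact h
      exact h1 ⟨d, b, c, a, hdc, hbc', hle,
        fun hh => hnc_ad (Or.inr hh), fun hh => hnc_bd (Or.inl hh),
        fun hh => hnc_ac (Or.inl hh)⟩
  -- two distinct classes
  have hQ2 : ∃ qx qy : Quotient s, qx ≠ qy := by
    by_contra hq
    push_neg at hq
    have hall : ∀ z w : P.Ev, ER P z w := fun z w =>
      Quotient.exact (hq (Quotient.mk s z) (Quotient.mk s w))
    have hne : ({B | B ∈ P.boxes ∧ x₀ ∈ B} : Set (Set P.Ev)).Nonempty := by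
      rcases hall x₀ y₀ with he | ⟨B, hB, hx, hy⟩
      · exact absurd he hxy
      · exact ⟨B, hB, hx⟩
    obtain ⟨B, hBmem, hBmax⟩ := Set.Finite.exists_maximalFor id _ (Set.toFinite _) hne
    have hBuniv : B = Set.univ := by
      ext z
      simp only [Set.mem_univ, iff_true]
      by_contra hz
      rcases hall x₀ z with he | ⟨C, hC, hx, hzC⟩
      · exact hz (he ▸ hBmem.2)
      · rcases laminar h2 hBmem.1 hC with hs | hs | hs
        · have hBC : id B = id C := le_antisymm hs (hBmax (j := C) ⟨hC, hx⟩ hs)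
          simp only [id] at hBC
          rw [← hBC] at hzC
          exact hz hzC
        · exact hz (hs hzC)
        · have : x₀ ∈ B ∩ C := ⟨hBmem.2, hx⟩
          rw [hs] at this
          exact this
    exact hu (hBuniv ▸ hBmem.1)
  obtain ⟨qx, qy, hqxy⟩ := hQ2
  rcases SPaux.seinsche (Quotient s) inferInstance adjQ hsymQ hirrQ hP4Q qx qy hqxy with
    ⟨T, hT1, hT2, hacross⟩ | ⟨T, hT1, hT2, hacross⟩
  · -- parallel case
    let S : Set P.Ev := {z | Quotient.mk s z ∈ T}
    obtain ⟨q, hq⟩ := hT1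
    obtain ⟨a, ha⟩ := Quotient.exists_rep q
    have hq' : ∃ q', q' ∉ T := by
      by_contra hqq
      push_neg at hqq
      exact hT2 (Set.eq_univ_of_forall hqq)
    obtain ⟨q', hq'T⟩ := hq'
    obtain ⟨a', ha'⟩ := Quotient.exists_rep q'
    refine ⟨S, ⟨a, show Quotient.mk s a ∈ T from ha.symm ▸ hq⟩, ?_, ?_, Or.inl ?_⟩
    · intro h
      have : a' ∈ S := h ▸ Set.mem_univ a'
      exact hq'T (ha' ▸ this)
    · intro B hB
      by_cases hd : B ∩ S = ∅
      · exact Or.inr hd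
      · left
        obtain ⟨y, hyB, hyS⟩ := Set.nonempty_iff_ne_empty.2 hd
        intro y' hy'B
        have hE : ER P y y' := Or.inr ⟨B, hB, hyB, hy'B⟩
        show Quotient.mk s y' ∈ T
        rw [← Quotient.sound (a := y) (b := y') hE]
        exact hyS
    · intro e he f hf
      have hna : ¬ adjQ (Quotient.mk s e) (Quotient.mk s f) :=
        hacross _ he _ hf
      have hnE : ¬ ER P e f := by
        intro hE
        exact hf (show Quotient.mk s f ∈ T from (Quotient.sound (a := e) (b := f) hE) ▸ he)
      have hnc : ¬ compR P e f := fun hc => hna ((adjQ_mk e f).2 ⟨hnE, hc⟩)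
      exact ⟨fun h => hnc (Or.inl h), fun h => hnc (Or.inr h)⟩
  · -- sequential case
    let S₀ : Set P.Ev := {z | Quotient.mk s z ∈ T}
    obtain ⟨q, hq⟩ := hT1
    obtain ⟨p, hp⟩ := Quotient.exists_rep q
    have hpS : p ∈ S₀ := show Quotient.mk s p ∈ T from hp.symm ▸ hq
    have hq' : ∃ q', q' ∉ T := by
      by_contra hqq
      push_neg at hqq
      exact hT2 (Set.eq_univ_of_forall hqq)
    obtain ⟨q', hq'T⟩ := hq'
    obtain ⟨q₀, hq₀⟩ := Quotient.exists_rep q'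
    have hq₀S : q₀ ∉ S₀ := fun h => hq'T (hq₀ ▸ h)
    have hcl : ∀ u ∈ S₀, ∀ v, r2R P u v → v ∈ S₀ := by
      intro u hu' v hr
      by_contra hv
      have hadj := hacross _ hu' (Quotient.mk s v) hv
      have := (adjQ_mk u v).1 hadj
      rcases hr with hE | hc
      · exact this.1 hE
      · exact hc this.2
    have hreachcl : ∀ u ∈ S₀, ∀ v, Relation.ReflTransGen (r2R P) u v → v ∈ S₀ := by
      intro u hu' v hr
      induction hr with
      | refl => exact hu'
      | tail hr' hstep ih => exact hcl _ ih _ hstep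
    have hnreach : ¬ Relation.ReflTransGen (r2R P) p q₀ := fun h =>
      hq₀S (hreachcl p hpS q₀ h)
    have hcomp : compR P p q₀ := by
      have hadj := hacross _ hpS (Quotient.mk s q₀) hq₀S
      exact ((adjQ_mk p q₀).1 hadj).2
    rcases hcomp with hle | hle
    · obtain ⟨S, hS1, hS2, hS3, hS4⟩ := build_prefix h2 h3 h4 q₀ p
        (fun h => hnreach (SPaux.reach_symm r2_symm h)) hle
      exact ⟨S, hS1, hS2, hS3, Or.inr hS4⟩
    · obtain ⟨S, hS1, hS2, hS3, hS4⟩ := build_prefix h2 h3 h4 p q₀ hnreach hle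
      exact ⟨S, hS1, hS2, hS3, Or.inr hS4⟩

end SplitMain
section MainInduction

variable {A : Type}

open Classical in
/-- Termination measure. -/
noncomputable def pbMeasure (P : PB A) : ℕ :=
  2 * Nat.card P.Ev + (if Set.univ ∈ P.boxes then 1 else 0)

lemma main_rev : ∀ (n : ℕ) (P : PB A), Finite P.Ev → pbMeasure P ≤ n →
    ¬ hasP1 P → ¬ hasP2 P → ¬ hasP3 P → ¬ hasP4 P →
    ∃ t : Term A, Iso P (semT t) := by
  intro n
  induction n using Nat.strong_induction_on with
  | _ n IH =>
  intro P hfin hm h1 h2 h3 h4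
  classical
  haveI : Finite P.Ev := hfin
  by_cases hu : Set.univ ∈ P.boxes
  · -- strip the universal box
    have hmeas : pbMeasure (unboxPB P) < pbMeasure P := by
      unfold pbMeasure
      have hcc : Nat.card (unboxPB P).Ev = Nat.card P.Ev := rfl
      rw [hcc]
      have hnot : Set.univ ∉ (unboxPB P).boxes := by
        intro h
        exact h.2 rfl
      rw [if_neg hnot, if_pos hu]
      omega
    obtain ⟨t, ht⟩ := IH (pbMeasure (unboxPB P)) (lt_of_lt_of_le hmeas hm)
      (unboxPB P) hfin le_rfl (unbox_noP1 h1) (unbox_noP2 h2) (unbox_noP3 h3)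
      (unbox_noP4 h4)
    exact ⟨.box t, iso_trans (iso_unbox P hu) (iso_box_congr ht)⟩
  · rcases Nat.lt_or_ge (Nat.card P.Ev) 2 with hc | hc
    · -- small cases
      interval_cases h : Nat.card P.Ev
      · rcases Nat.card_eq_zero.1 h with hie | hinf
        · exact ⟨.one, iso_empty P hie⟩
        · exact absurd hfin (by rw [not_finite_iff_infinite]; exact hinf)
      · obtain ⟨hss, ⟨e₀⟩⟩ := Nat.card_eq_one_iff_unique.1 h
        exact ⟨.atom (P.lab e₀), iso_single P hss e₀ hu⟩
    · -- split
      have hnt : Nontrivial P.Ev := Finite.one_lt_card_iff_nontrivial.1 hc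
      obtain ⟨x₀, y₀, hxy⟩ := hnt
      obtain ⟨S, hS1, hS2, hNest, hkind⟩ := exists_split P hfin h1 h2 h3 h4 hu x₀ y₀ hxy
      have hcS : Nat.card ↥S < Nat.card P.Ev := by
        have h1' : S ⊂ Set.univ := lt_of_le_of_ne (Set.subset_univ S) hS2
        have h2' := Set.ncard_lt_ncard h1' Set.finite_univ
        rwa [Set.ncard_univ, ← Nat.card_coe_set_eq] at h2'
      have hcSc : Nat.card ↥(Sᶜ) < Nat.card P.Ev := by
        have hne : Sᶜ ≠ Set.univ := by
          intro h
          obtain ⟨a, ha⟩ := hS1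
          have : a ∈ Sᶜ := h ▸ Set.mem_univ a
          exact this ha
        have h1' : Sᶜ ⊂ Set.univ := lt_of_le_of_ne (Set.subset_univ _) hne
        have h2' := Set.ncard_lt_ncard h1' Set.finite_univ
        rwa [Set.ncard_univ, ← Nat.card_coe_set_eq] at h2'
      have hmb : ∀ Q : PB A, pbMeasure Q ≤ 2 * Nat.card Q.Ev + 1 := by
        intro Q
        unfold pbMeasure
        split <;> omega
      have hmP : 2 * Nat.card P.Ev ≤ pbMeasure P := by
        unfold pbMeasure
        split <;> omega
      have hlt1 : pbMeasure (restrictPB P S) < n := by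
        have := hmb (restrictPB P S)
        have hcc : Nat.card (restrictPB P S).Ev = Nat.card ↥S := rfl
        omega
      have hlt2 : pbMeasure (restrictPB P Sᶜ) < n := by
        have := hmb (restrictPB P Sᶜ)
        have hcc : Nat.card (restrictPB P Sᶜ).Ev = Nat.card ↥(Sᶜ) := rfl
        omega
      have hfS : Finite (restrictPB P S).Ev := by
        show Finite ↥S
        infer_instance
      have hfSc : Finite (restrictPB P Sᶜ).Ev := by
        show Finite ↥(Sᶜ)
        infer_instance
      obtain ⟨t1, ht1⟩ := IH (pbMeasure (restrictPB P S)) hlt1 (restrictPB P S)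
        hfS le_rfl (restrict_noP1 h1) (restrict_noP2 h2)
        (restrict_noP3 h3) (restrict_noP4 h4)
      obtain ⟨t2, ht2⟩ := IH (pbMeasure (restrictPB P Sᶜ)) hlt2 (restrictPB P Sᶜ)
        hfSc le_rfl (restrict_noP1 h1) (restrict_noP2 h2)
        (restrict_noP3 h3) (restrict_noP4 h4)
      rcases hkind with hIsol | hPre
      · exact ⟨.par t1 t2, iso_trans (glue_par P S hNest hIsol) (iso_par_congr ht1 ht2)⟩
      · exact ⟨.seq t1 t2, iso_trans (glue_seq P S hNest hPre) (iso_seq_congr ht1 ht2)⟩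

end MainInduction

/-- Characterization of series–parallel pomsets with boxes: a finite pomset with
boxes is series–parallel iff it contains none of the four forbidden patterns. -/
theorem sp_characterization (A : Type) (P : PB A) (hfin : Finite P.Ev) :
    (∃ t : Term A, Iso P (semT t)) ↔
      (¬ hasP1 P ∧ ¬ hasP2 P ∧ ¬ hasP3 P ∧ ¬ hasP4 P) := by
  constructor
  · rintro ⟨t, ⟨φ, φo, φb⟩⟩
    exact ⟨fun hp => semT_noP1 t (hasP1_transfer φ φo hp),
      fun hp => semT_noP2 t (hasP2_transfer φ hp),
      fun hp => semT_noP3 t (hasP3_transfer φ φo hp),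
      fun hp => semT_noP4 t (hasP4_transfer φ φo hp)⟩
  · rintro ⟨h1, h2, h3, h4⟩
    exact main_rev (pbMeasure P) P hfin le_rfl h1 h2 h3 h4
end

section
/- For any term s whose interpretation has its full event set as a box, there exists a term t such that s = [t] is provable in the bimonoid-with-boxes theory and the interpretation of t does not have its full event set as a box. -/
lemma empty_eq_one {A : Type} (t : Term A) (h : IsEmpty (semT t).Ev) : BimEq t .one := by
  induction t with
  | one => exact .refl _
  | atom a => exact (h.false PUnit.unit).elim
  | seq s t ihs iht =>
      have hs : IsEmpty (semT s).Ev := ⟨fun e => h.false (Sum.inl e)⟩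
      have ht : IsEmpty (semT t).Ev := ⟨fun e => h.false (Sum.inr e)⟩
      exact .trans (.seq_congr (ihs hs) (iht ht)) (.seq_unit_l _)
  | par s t ihs iht =>
      have hs : IsEmpty (semT s).Ev := ⟨fun e => h.false (Sum.inl e)⟩
      have ht : IsEmpty (semT t).Ev := ⟨fun e => h.false (Sum.inr e)⟩
      exact .trans (.par_congr (ihs hs) (iht ht)) (.par_unit _)
  | box s ihs => exact .trans (.box_congr (ihs h)) .box_one

/-- If the interpretation of `s` has its full event set as a box, then `s` is
provably a boxed term `[t]` where the interpretation of `t` does not. -/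
theorem unbox_term (A : Type) (s : Term A)
    (h : (Set.univ : Set (semT s).Ev) ∈ (semT s).boxes) :
    ∃ t : Term A, BimEq s (.box t) ∧
      (Set.univ : Set (semT t).Ev) ∉ (semT t).boxes := by
  induction s with
  | one => exact absurd h (Set.notMem_empty _)
  | atom a => exact absurd h (Set.notMem_empty _)
  | seq s t ihs iht =>
      rcases h with ⟨B, hB, hBeq⟩ | ⟨B, hB, hBeq⟩
      · have ht : IsEmpty (semT t).Ev := ⟨fun x => by
          have : Sum.inr x ∈ Sum.inl '' B := hBeq ▸ Set.mem_univ _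
          rcases this with ⟨y, _, hy⟩; cases hy⟩
        have hBu : B = Set.univ := by
          ext e
          constructor
          · intro _; trivial
          · intro _
            have : Sum.inl e ∈ Sum.inl '' B := hBeq ▸ Set.mem_univ _
            rcases this with ⟨y, hy, hye⟩
            cases Sum.inl_injective hye; exact hy
        obtain ⟨u, hequ, hu⟩ := ihs (hBu ▸ hB)
        exact ⟨u, .trans (.seq_congr hequ (empty_eq_one t ht)) (.seq_unit_r _), hu⟩
      · have hs : IsEmpty (semT s).Ev := ⟨fun x => by
          have : Sum.inl x ∈ Sum.inr '' B := hBeq ▸ Set.mem_univ _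
          rcases this with ⟨y, _, hy⟩; cases hy⟩
        have hBu : B = Set.univ := by
          ext e
          constructor
          · intro _; trivial
          · intro _
            have : Sum.inr e ∈ Sum.inr '' B := hBeq ▸ Set.mem_univ _
            rcases this with ⟨y, hy, hye⟩
            cases Sum.inr_injective hye; exact hy
        obtain ⟨u, hequ, hu⟩ := iht (hBu ▸ hB)
        exact ⟨u, .trans (.seq_congr (empty_eq_one s hs) hequ) (.seq_unit_l _), hu⟩
  | par s t ihs iht =>
      rcases h with ⟨B, hB, hBeq⟩ | ⟨B, hB, hBeq⟩
      · have ht : IsEmpty (semT t).Ev := ⟨fun x => by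
          have : Sum.inr x ∈ Sum.inl '' B := hBeq ▸ Set.mem_univ _
          rcases this with ⟨y, _, hy⟩; cases hy⟩
        have hBu : B = Set.univ := by
          ext e
          constructor
          · intro _; trivial
          · intro _
            have : Sum.inl e ∈ Sum.inl '' B := hBeq ▸ Set.mem_univ _
            rcases this with ⟨y, hy, hye⟩
            cases Sum.inl_injective hye; exact hy
        obtain ⟨u, hequ, hu⟩ := ihs (hBu ▸ hB)
        exact ⟨u, .trans (.trans (.par_congr hequ (empty_eq_one t ht)) (.par_comm _ _)) (.par_unit _), hu⟩
      · have hs : IsEmpty (semT s).Ev := ⟨fun x => by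
          have : Sum.inl x ∈ Sum.inr '' B := hBeq ▸ Set.mem_univ _
          rcases this with ⟨y, _, hy⟩; cases hy⟩
        have hBu : B = Set.univ := by
          ext e
          constructor
          · intro _; trivial
          · intro _
            have : Sum.inr e ∈ Sum.inr '' B := hBeq ▸ Set.mem_univ _
            rcases this with ⟨y, hy, hye⟩
            cases Sum.inr_injective hye; exact hy
        obtain ⟨u, hequ, hu⟩ := iht (hBu ▸ hB)
        exact ⟨u, .trans (.par_congr (empty_eq_one s hs) hequ) (.par_unit _), hu⟩
  | box s ihs =>
      by_cases hc : (Set.univ : Set (semT s).Ev) ∈ (semT s).boxes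
      · obtain ⟨u, he, hu⟩ := ihs hc
        exact ⟨u, .trans (.box_congr he) (.box_box u), hu⟩
      · exact ⟨s, .refl _, hc⟩
end
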